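/- arXiv:1112.3983 — 4 statements merged into one kernel-verified Lean document; each statement's English description precedes it below -/
import Mathlib

section
/- Let n ≥ 3 and K > 0. There exists a constant C > 0, depending only on n and K, such that for every w ∈ ℝⁿ with 0 < ‖w‖ ≤ 1/2: ∫_{ {z ∈ ℝⁿ : 2‖w‖ ≤ ‖z‖ ≤ K} } ‖z‖^{2−n} ‖z + w‖^{1−n} dz ≤ C·log(1/‖w‖) if n = 3, and ≤ C·‖w‖^{3−n} if n ≥ 4. -/
open MeasureTheory
open Set Real

lemma annulus_lintegral (n : ℕ) (hn : 1 ≤ n) (p a b : ℝ) (ha : 0 < a) (hab : a ≤ b) :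
    ∫⁻ z in {z : EuclideanSpace ℝ (Fin n) | a ≤ ‖z‖ ∧ ‖z‖ ≤ b}, ENNReal.ofReal (‖z‖ ^ p)
      = ENNReal.ofReal (((n : ℝ) * (volume (Metric.ball (0 : EuclideanSpace ℝ (Fin n)) 1)).toReal) *
          ∫ y in a..b, y ^ (p + ((n : ℝ) - 1))) := by
  haveI : Nontrivial (EuclideanSpace ℝ (Fin n)) := by
    apply Module.nontrivial_of_finrank_pos (R := ℝ)
    rw [finrank_euclideanSpace_fin]; omega
  set E := EuclideanSpace ℝ (Fin n)
  set S : Set E := {z : E | a ≤ ‖z‖ ∧ ‖z‖ ≤ b} with hS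
  have hSeq : S = (fun z : E => ‖z‖) ⁻¹' (Icc a b) := by
    ext z; simp [hS, Icc]
  have hSmeas : MeasurableSet S := by
    rw [hSeq]; exact measurableSet_Icc.preimage (by fun_prop)
  set f : ℝ → ℝ := (Icc a b).indicator (fun y => y ^ p) with hf
  -- step 1 : lintegral over S = lintegral of ofReal (f ‖z‖)
  have h1 : ∫⁻ z in S, ENNReal.ofReal (‖z‖ ^ p) = ∫⁻ z : E, ENNReal.ofReal (f ‖z‖) := by
    rw [← lintegral_indicator hSmeas]
    congr 1; ext z
    by_cases hz : z ∈ S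
    · rw [Set.indicator_of_mem hz, hf, Set.indicator_of_mem (by rw [hSeq] at hz; exact hz)]
    · rw [Set.indicator_of_notMem hz, hf,
        Set.indicator_of_notMem (by rw [hSeq] at hz; exact hz), ENNReal.ofReal_zero]
  -- step 2 : integrability of fun z => f ‖z‖
  have hInt : Integrable (fun z : E => f ‖z‖) := by
    have heq : (fun z : E => f ‖z‖) = S.indicator (fun z => ‖z‖ ^ p) := by
      ext z
      by_cases hz : z ∈ S
      · rw [Set.indicator_of_mem hz, hf, Set.indicator_of_mem (by rw [hSeq] at hz; exact hz)]
      · rw [Set.indicator_of_notMem hz, hf,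
          Set.indicator_of_notMem (by rw [hSeq] at hz; exact hz)]
    rw [heq, integrable_indicator_iff hSmeas]
    have hScompact : IsCompact S := by
      refine (isCompact_closedBall (0 : E) b).of_isClosed_subset ?_ ?_
      · rw [hSeq]; exact isClosed_Icc.preimage (by fun_prop)
      · intro z hz; rw [Metric.mem_closedBall, dist_zero_right]; exact hz.2
    refine ContinuousOn.integrableOn_compact hScompact ?_
    apply ContinuousOn.rpow_const (continuous_norm.continuousOn)
    intro z hz
    exact Or.inl (ne_of_gt (lt_of_lt_of_le ha hz.1))
  have h2 : ∫⁻ z : E, ENNReal.ofReal (f ‖z‖) = ENNReal.ofReal (∫ z : E, f ‖z‖) := by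
    rw [ofReal_integral_eq_lintegral_ofReal hInt]
    filter_upwards with z
    exact Set.indicator_nonneg (fun y hy => rpow_nonneg (le_trans ha.le hy.1) p) _
  rw [h1, h2]
  congr 1
  rw [integral_fun_norm_addHaar volume f]
  rw [finrank_euclideanSpace_fin]
  rw [nsmul_eq_mul, smul_eq_mul, mul_assoc]
  congr 1
  congr 1
  -- now : ∫ y in Ioi 0, y ^ (n-1) • f y = ∫ y in a..b, y ^ (p + (n-1))
  have h3 : ∀ y ∈ Ioi (0:ℝ), y ^ (n - 1 : ℕ) • f y
      = (Icc a b).indicator (fun y => y ^ (p + ((n:ℝ) - 1))) y := by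
    intro y hy
    rw [smul_eq_mul, hf]
    by_cases hyi : y ∈ Icc a b
    · rw [Set.indicator_of_mem hyi, Set.indicator_of_mem hyi]
      rw [← Real.rpow_natCast y (n-1), ← Real.rpow_add (lt_of_lt_of_le ha hyi.1)]
      congr 1
      push_cast [Nat.cast_sub hn]
      ring
    · rw [Set.indicator_of_notMem hyi, Set.indicator_of_notMem hyi, mul_zero]
  rw [setIntegral_congr_fun measurableSet_Ioi h3, integral_indicator measurableSet_Icc,
    Measure.restrict_restrict measurableSet_Icc]
  have : Icc a b ∩ Ioi 0 = Icc a b := by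
    apply inter_eq_left.2; intro y hy; exact lt_of_lt_of_le ha hy.1
  rw [this, integral_Icc_eq_integral_Ioc, ← intervalIntegral.integral_of_le hab]

/-- Far-field estimate `I₃`: for `n ≥ 3` and `K > 0` there is `C > 0`
(depending only on `n` and `K`) such that for all `w` with `0 < ‖w‖ ≤ 1/2`,
`∫_{2‖w‖ ≤ ‖z‖ ≤ K} ‖z‖^{2−n} ‖z+w‖^{1−n} dz ≤ C log(1/‖w‖)` if `n = 3`,
and `≤ C ‖w‖^{3−n}` if `n ≥ 4`. -/
theorem stmt_5 (n : ℕ) (hn : 3 ≤ n) (K : ℝ) (hK : 0 < K) :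
    ∃ C > (0 : ℝ), ∀ w : EuclideanSpace ℝ (Fin n), 0 < ‖w‖ → ‖w‖ ≤ 1 / 2 →
      ((n = 3 →
        (∫⁻ z in {z : EuclideanSpace ℝ (Fin n) | 2 * ‖w‖ ≤ ‖z‖ ∧ ‖z‖ ≤ K},
            ENNReal.ofReal (‖z‖ ^ ((2 : ℝ) - n) * ‖z + w‖ ^ ((1 : ℝ) - n)))
          ≤ ENNReal.ofReal (C * Real.log (1 / ‖w‖))) ∧
       (4 ≤ n →
        (∫⁻ z in {z : EuclideanSpace ℝ (Fin n) | 2 * ‖w‖ ≤ ‖z‖ ∧ ‖z‖ ≤ K},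
            ENNReal.ofReal (‖z‖ ^ ((2 : ℝ) - n) * ‖z + w‖ ^ ((1 : ℝ) - n)))
          ≤ ENNReal.ofReal (C * ‖w‖ ^ ((3 : ℝ) - n)))) := by
  set E := EuclideanSpace ℝ (Fin n)
  set b : ℝ := max K 1 with hb
  have hb1 : (1 : ℝ) ≤ b := le_max_right _ _
  set c : ℝ := (n : ℝ) * (volume (Metric.ball (0 : E) 1)).toReal with hc
  have hcpos : 0 < c := by
    apply mul_pos (by positivity)
    exact ENNReal.toReal_pos (Metric.measure_ball_pos volume 0 one_pos).ne' measure_ball_lt_top.ne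
  set c₂ : ℝ := (2 : ℝ) ^ ((n : ℝ) - 1) with hc2
  have hc2pos : 0 < c₂ := Real.rpow_pos_of_pos two_pos _
  have hlogb : 0 ≤ Real.log b := Real.log_nonneg hb1
  set C : ℝ := c₂ * c * (Real.log b / Real.log 2 + 1) + c₂ * c / ((n : ℝ) - 3) with hC
  have hCpos : 0 < C := by
    apply add_pos_of_pos_of_nonneg
    · apply mul_pos (mul_pos hc2pos hcpos)
      have : 0 ≤ Real.log b / Real.log 2 := by positivity
      linarith
    · apply div_nonneg (mul_nonneg hc2pos.le hcpos.le)
      have : (3 : ℝ) ≤ (n : ℝ) := by exact_mod_cast hn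
      linarith
  refine ⟨C, hCpos, fun w hw hw2 => ?_⟩
  set a : ℝ := 2 * ‖w‖ with ha
  have hapos : 0 < a := by positivity
  have hab : a ≤ b := by
    have : a ≤ 1 := by rw [ha]; linarith
    linarith
  -- the main common bound
  have key : ∫⁻ z in {z : E | 2 * ‖w‖ ≤ ‖z‖ ∧ ‖z‖ ≤ K},
        ENNReal.ofReal (‖z‖ ^ ((2 : ℝ) - n) * ‖z + w‖ ^ ((1 : ℝ) - n))
      ≤ ENNReal.ofReal (c₂ * (c * ∫ y in a..b, y ^ ((2 : ℝ) - n))) := by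
    have hSmeas : MeasurableSet {z : E | 2 * ‖w‖ ≤ ‖z‖ ∧ ‖z‖ ≤ K} := by
      have : {z : E | 2 * ‖w‖ ≤ ‖z‖ ∧ ‖z‖ ≤ K} = (fun z : E => ‖z‖) ⁻¹' (Set.Icc (2 * ‖w‖) K) := by
        ext z; simp [Set.mem_Icc]
      rw [this]; exact measurableSet_Icc.preimage (by fun_prop)
    calc ∫⁻ z in {z : E | 2 * ‖w‖ ≤ ‖z‖ ∧ ‖z‖ ≤ K},
          ENNReal.ofReal (‖z‖ ^ ((2 : ℝ) - n) * ‖z + w‖ ^ ((1 : ℝ) - n))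
        ≤ ∫⁻ z in {z : E | 2 * ‖w‖ ≤ ‖z‖ ∧ ‖z‖ ≤ K},
            ENNReal.ofReal (c₂ * ‖z‖ ^ ((3 : ℝ) - 2 * n)) := by
          apply setLIntegral_mono' hSmeas
          intro z hz
          obtain ⟨hz1, hz2⟩ := hz
          have hz0 : 0 < ‖z‖ := lt_of_lt_of_le (by positivity) hz1
          apply ENNReal.ofReal_le_ofReal
          have hzw : ‖z‖ / 2 ≤ ‖z + w‖ := by
            have h1 : ‖z‖ ≤ ‖z + w‖ + ‖w‖ := by
              calc ‖z‖ = ‖z + w - w‖ := by rw [add_sub_cancel_right]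
                _ ≤ ‖z + w‖ + ‖w‖ := norm_sub_le _ _
            linarith
          have h2 : ‖z + w‖ ^ ((1 : ℝ) - n) ≤ (‖z‖ / 2) ^ ((1 : ℝ) - n) := by
            apply Real.rpow_le_rpow_of_nonpos (by positivity) hzw
            have : (3 : ℝ) ≤ (n : ℝ) := by exact_mod_cast hn
            linarith
          have h3 : (‖z‖ / 2) ^ ((1 : ℝ) - n) = ‖z‖ ^ ((1 : ℝ) - n) * c₂ := by
            rw [Real.div_rpow (norm_nonneg _) (by norm_num), div_eq_mul_inv,
              ← Real.rpow_neg (by norm_num), neg_sub, hc2]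
          calc ‖z‖ ^ ((2 : ℝ) - n) * ‖z + w‖ ^ ((1 : ℝ) - n)
              ≤ ‖z‖ ^ ((2 : ℝ) - n) * (‖z‖ ^ ((1 : ℝ) - n) * c₂) := by
                rw [← h3]
                exact mul_le_mul_of_nonneg_left h2 (Real.rpow_nonneg (norm_nonneg _) _)
            _ = c₂ * ‖z‖ ^ ((3 : ℝ) - 2 * n) := by
                rw [show (3 : ℝ) - 2 * n = ((2 : ℝ) - n) + ((1 : ℝ) - n) by ring,
                  Real.rpow_add hz0]; ring
      _ ≤ ∫⁻ z in {z : E | a ≤ ‖z‖ ∧ ‖z‖ ≤ b},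
            ENNReal.ofReal (c₂ * ‖z‖ ^ ((3 : ℝ) - 2 * n)) := by
          apply lintegral_mono_set
          intro z hz
          exact ⟨hz.1, le_trans hz.2 (le_max_left _ _)⟩
      _ = ENNReal.ofReal c₂ * ∫⁻ z in {z : E | a ≤ ‖z‖ ∧ ‖z‖ ≤ b},
            ENNReal.ofReal (‖z‖ ^ ((3 : ℝ) - 2 * n)) := by
          rw [← lintegral_const_mul' _ _ ENNReal.ofReal_ne_top]
          congr 1; ext z
          rw [ENNReal.ofReal_mul hc2pos.le]
      _ = ENNReal.ofReal (c₂ * (c * ∫ y in a..b, y ^ ((2 : ℝ) - n))) := by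
          rw [annulus_lintegral n (by omega) _ a b hapos hab]
          rw [← ENNReal.ofReal_mul hc2pos.le]
          congr 3
          · push_cast; ring
  constructor
  · -- n = 3
    intro hn3
    refine le_trans key (ENNReal.ofReal_le_ofReal ?_)
    subst hn3
    have hI : (∫ y in a..b, y ^ ((2 : ℝ) - (3:ℕ))) = Real.log (b / a) := by
      rw [show ((2 : ℝ) - (3:ℕ)) = -1 by norm_num]
      simp only [Real.rpow_neg_one]
      exact integral_inv (by
        rw [Set.uIcc_of_le hab]; intro h; exact absurd h.1 (by linarith))
    rw [hI]
    set L : ℝ := Real.log (1 / ‖w‖) with hL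
    have hw2' : (2 : ℝ) ≤ 1 / ‖w‖ := by
      rw [le_div_iff₀ hw]; linarith
    have hL2 : Real.log 2 ≤ L := Real.log_le_log (by norm_num) hw2'
    have hlog2 : (0 : ℝ) < Real.log 2 := Real.log_pos (by norm_num)
    have hLpos : 0 < L := lt_of_lt_of_le hlog2 hL2
    have hlogab : Real.log (b / a) ≤ Real.log b + L := by
      rw [Real.log_div (by linarith) hapos.ne', ha, Real.log_mul (by norm_num) hw.ne',
        hL, one_div, Real.log_inv]
      linarith
    have hlogb' : Real.log b ≤ (Real.log b / Real.log 2) * L := by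
      calc Real.log b = (Real.log b / Real.log 2) * Real.log 2 := by
            field_simp
        _ ≤ (Real.log b / Real.log 2) * L := by
            apply mul_le_mul_of_nonneg_left hL2 (by positivity)
    calc c₂ * (c * Real.log (b / a)) ≤ c₂ * (c * ((Real.log b / Real.log 2) * L + L)) := by
          apply mul_le_mul_of_nonneg_left _ hc2pos.le
          apply mul_le_mul_of_nonneg_left _ hcpos.le
          linarith
      _ = (c₂ * c * (Real.log b / Real.log 2 + 1)) * L := by ring
      _ ≤ C * L := by
          apply mul_le_mul_of_nonneg_right _ hLpos.le
          rw [hC]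
          have : 0 ≤ c₂ * c / ((3:ℕ) - 3 : ℝ) := by norm_num
          push_cast
          push_cast at this
          linarith
  · -- n ≥ 4
    intro hn4
    refine le_trans key (ENNReal.ofReal_le_ofReal ?_)
    have hn4' : (4 : ℝ) ≤ (n : ℝ) := by exact_mod_cast hn4
    have hI : (∫ y in a..b, y ^ ((2 : ℝ) - n)) = (b ^ ((3:ℝ) - n) - a ^ ((3:ℝ) - n)) / ((3:ℝ) - n) := by
      rw [integral_rpow (Or.inr ⟨by intro h; linarith, by
        rw [Set.uIcc_of_le hab]; intro h; exact absurd h.1 (by linarith)⟩)]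
      have h23 : (2:ℝ) - n + 1 = 3 - n := by ring
      rw [h23]
    rw [hI]
    have hban : b ^ ((3:ℝ) - n) ≤ a ^ ((3:ℝ) - n) := by
      apply Real.rpow_le_rpow_of_nonpos hapos hab (by linarith)
    have ha3n : a ^ ((3:ℝ) - n) ≤ ‖w‖ ^ ((3:ℝ) - n) := by
      rw [ha, Real.mul_rpow (by norm_num) (norm_nonneg _)]
      have h1 : (2:ℝ) ^ ((3:ℝ) - n) ≤ 1 :=
        Real.rpow_le_one_of_one_le_of_nonpos (by norm_num) (by linarith)
      calc (2:ℝ) ^ ((3:ℝ) - n) * ‖w‖ ^ ((3:ℝ) - n) ≤ 1 * ‖w‖ ^ ((3:ℝ) - n) :=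
            mul_le_mul_of_nonneg_right h1 (Real.rpow_nonneg (norm_nonneg _) _)
        _ = ‖w‖ ^ ((3:ℝ) - n) := one_mul _
    have hwpos : 0 < ‖w‖ ^ ((3:ℝ) - n) := Real.rpow_pos_of_pos hw _
    have hbnn : 0 ≤ b ^ ((3:ℝ) - n) := Real.rpow_nonneg (by linarith) _
    calc c₂ * (c * ((b ^ ((3:ℝ) - n) - a ^ ((3:ℝ) - n)) / ((3:ℝ) - n)))
        = c₂ * c * ((a ^ ((3:ℝ) - n) - b ^ ((3:ℝ) - n)) / ((n:ℝ) - 3)) := by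
          have hne1 : (3:ℝ) - n ≠ 0 := by intro h; nlinarith
          have hne2 : (n:ℝ) - 3 ≠ 0 := by intro h; nlinarith
          field_simp
          ring
      _ ≤ c₂ * c * (‖w‖ ^ ((3:ℝ) - n) / ((n:ℝ) - 3)) := by
          apply mul_le_mul_of_nonneg_left _ (mul_nonneg hc2pos.le hcpos.le)
          apply div_le_div_of_nonneg_right _ (by linarith)
          linarith
      _ = (c₂ * c / ((n:ℝ) - 3)) * ‖w‖ ^ ((3:ℝ) - n) := by ring
      _ ≤ C * ‖w‖ ^ ((3:ℝ) - n) := by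
          apply mul_le_mul_of_nonneg_right _ hwpos.le
          rw [hC]
          have h0 : 0 ≤ c₂ * c * (Real.log b / Real.log 2 + 1) := by positivity
          linarith
end

section
/- Let n ≥ 3 and K > 0. There exists a constant C > 0, depending only on n and K, such that for every w ∈ ℝⁿ with 0 < ‖w‖ ≤ 1/2: ∫_{ {z ∈ ℝⁿ : ‖z‖ ≤ K} } ‖z‖^{2−n} ‖z + w‖^{1−n} dz ≤ C·log(1/‖w‖) if n = 3, and ≤ C·‖w‖^{3−n} if n ≥ 4. -/
open MeasureTheory
open Metric Set
open scoped ENNReal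


lemma dyadic_up {a t : ℝ} (ha : 0 < a) (hat : a ≤ t) :
    ∃ j : ℕ, (j : ℝ) ≤ Real.logb 2 (t / a) ∧ a * 2 ^ j ≤ t ∧ t ≤ a * 2 ^ (j + 1) := by
  have ht : 0 < t := ha.trans_le hat
  have hta : 1 ≤ t / a := (one_le_div ha).2 hat
  have hta0 : 0 < t / a := lt_of_lt_of_le zero_lt_one hta
  have hlog : 0 ≤ Real.logb 2 (t / a) := Real.logb_nonneg one_lt_two hta
  refine ⟨Nat.floor (Real.logb 2 (t / a)), Nat.floor_le hlog, ?_, ?_⟩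
  · have h1 : (2:ℝ) ^ ((Nat.floor (Real.logb 2 (t/a)) : ℝ)) ≤ 2 ^ Real.logb 2 (t/a) :=
      Real.rpow_le_rpow_of_exponent_le one_le_two (Nat.floor_le hlog)
    rw [Real.rpow_logb two_pos (by norm_num) hta0, Real.rpow_natCast] at h1
    calc a * 2 ^ Nat.floor (Real.logb 2 (t/a)) ≤ a * (t / a) := by
          exact mul_le_mul_of_nonneg_left h1 ha.le
      _ = t := by field_simp
  · have h2 : Real.logb 2 (t/a) < (Nat.floor (Real.logb 2 (t/a)) : ℝ) + 1 :=
      Nat.lt_floor_add_one _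
    have h3 : t / a < 2 ^ ((Nat.floor (Real.logb 2 (t/a)) : ℝ) + 1) := by
      calc t / a = 2 ^ Real.logb 2 (t/a) := (Real.rpow_logb two_pos (by norm_num) hta0).symm
        _ < _ := Real.rpow_lt_rpow_of_exponent_lt one_lt_two h2
    rw [show ((Nat.floor (Real.logb 2 (t/a)) : ℝ) + 1) = ((Nat.floor (Real.logb 2 (t/a)) + 1 : ℕ) : ℝ) by push_cast; ring, Real.rpow_natCast] at h3
    have h4 := (div_lt_iff₀ ha).1 h3
    nlinarith [h4]

lemma core (n : ℕ) (s a b : ℝ) (ha : 0 < a) (hs : s ≤ 0) (hb : 0 ≤ b) :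
    ∫⁻ z in {z : EuclideanSpace ℝ (Fin n) | a ≤ ‖z‖ ∧ ‖z‖ ≤ b},
      ENNReal.ofReal (‖z‖ ^ s)
      ≤ ENNReal.ofReal (a ^ s * b ^ (n : ℝ))
          * volume (ball (0 : EuclideanSpace ℝ (Fin n)) 1) := by
  set A := {z : EuclideanSpace ℝ (Fin n) | a ≤ ‖z‖ ∧ ‖z‖ ≤ b} with hA
  have hAm : MeasurableSet A := by
    have : A = (fun z : EuclideanSpace ℝ (Fin n) => ‖z‖) ⁻¹' (Set.Icc a b) := by
      ext z; simp [hA, Set.mem_Icc]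
    rw [this]; exact measurable_norm measurableSet_Icc
  calc ∫⁻ z in A, ENNReal.ofReal (‖z‖ ^ s)
      ≤ ∫⁻ _ in A, ENNReal.ofReal (a ^ s) := by
        refine setLIntegral_mono' hAm fun z hz => ?_
        exact ENNReal.ofReal_le_ofReal (Real.rpow_le_rpow_of_nonpos ha hz.1 hs)
    _ = ENNReal.ofReal (a ^ s) * volume A := setLIntegral_const _ _
    _ ≤ ENNReal.ofReal (a ^ s) * volume (closedBall (0 : EuclideanSpace ℝ (Fin n)) b) := by
        gcongr
        exact fun z hz => mem_closedBall_zero_iff.2 hz.2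
    _ = ENNReal.ofReal (a ^ s * b ^ (n:ℝ)) * volume (ball (0 : EuclideanSpace ℝ (Fin n)) 1) := by
        rw [Measure.addHaar_closedBall _ _ hb, finrank_euclideanSpace_fin,
          ← mul_assoc, ← ENNReal.ofReal_mul (Real.rpow_nonneg ha.le _), Real.rpow_natCast]

lemma rpow_helper (ρ : ℝ) (hρ : 0 < ρ) (c d e f : ℝ) :
    (ρ * 2 ^ c) ^ d * (ρ * 2 ^ e) ^ f = ρ ^ (d + f) * 2 ^ (c*d + e*f) := by
  have h2 : (0:ℝ) < 2 := two_pos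
  calc (ρ * 2 ^ c) ^ d * (ρ * 2 ^ e) ^ f
      = (ρ^d * ((2:ℝ)^c)^d) * (ρ^f * ((2:ℝ)^e)^f) := by
        rw [Real.mul_rpow hρ.le (Real.rpow_nonneg h2.le _),
          Real.mul_rpow hρ.le (Real.rpow_nonneg h2.le _)]
    _ = (ρ^d * ρ^f) * (((2:ℝ)^c)^d * ((2:ℝ)^e)^f) := by ring
    _ = ρ ^ (d + f) * 2 ^ (c*d + e*f) := by
        rw [← Real.rpow_add hρ, ← Real.rpow_mul h2.le, ← Real.rpow_mul h2.le,
          ← Real.rpow_add h2]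

lemma div_pow_eq (ρ : ℝ) (j : ℕ) : ρ / 2 ^ j = ρ * 2 ^ (-(j:ℝ)) := by
  rw [Real.rpow_neg two_pos.le, div_eq_mul_inv, Real.rpow_natCast]

lemma small_ball (n : ℕ) (s : ℝ) (hs : s < 0) (hns : 0 < (n:ℝ) + s) :
    ∃ c : ℝ≥0∞, c ≠ ⊤ ∧ ∀ ρ : ℝ, 0 < ρ →
      ∫⁻ z in closedBall (0 : EuclideanSpace ℝ (Fin n)) ρ, ENNReal.ofReal (‖z‖ ^ s)
        ≤ ENNReal.ofReal (ρ ^ ((n:ℝ) + s)) * c := by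
  set V := volume (ball (0 : EuclideanSpace ℝ (Fin n)) 1) with hVdef
  have hV : V ≠ ⊤ := measure_ball_lt_top.ne
  set q : ℝ := 2 ^ (-((n:ℝ) + s)) with hq
  have hq0 : 0 ≤ q := Real.rpow_nonneg two_pos.le _
  have hq1 : ENNReal.ofReal q < 1 := by
    rw [ENNReal.ofReal_lt_one]
    exact Real.rpow_lt_one_of_one_lt_of_neg one_lt_two (neg_lt_zero.2 hns)
  have hsub1 : (1 : ℝ≥0∞) - ENNReal.ofReal q ≠ 0 := (tsub_pos_of_lt hq1).ne'
  refine ⟨ENNReal.ofReal (2 ^ (-s)) * V * (1 - ENNReal.ofReal q)⁻¹, ?_, ?_⟩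
  · exact ENNReal.mul_ne_top (ENNReal.mul_ne_top ENNReal.ofReal_ne_top hV)
      (ENNReal.inv_ne_top.2 hsub1)
  · intro ρ hρ
    set A : ℕ → Set (EuclideanSpace ℝ (Fin n)) :=
      fun j => {z | ρ / 2^(j+1) ≤ ‖z‖ ∧ ‖z‖ ≤ ρ / 2^j} with hA
    have hsub : closedBall (0 : EuclideanSpace ℝ (Fin n)) ρ ⊆ {0} ∪ ⋃ j, A j := by
      intro z hz
      rcases eq_or_ne z 0 with h0 | h0
      · exact Or.inl (by simp [h0])
      · right
        have hz' : ‖z‖ ≤ ρ := mem_closedBall_zero_iff.1 hz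
        have hzpos : 0 < ‖z‖ := norm_pos_iff.2 h0
        obtain ⟨j, -, h1, h2⟩ := dyadic_up hzpos hz'
        refine mem_iUnion.2 ⟨j, ?_, ?_⟩
        · rw [div_le_iff₀ (by positivity)]
          linarith [h2]
        · rw [le_div_iff₀ (by positivity)]
          linarith [h1]
    have key : ∀ j : ℕ, ENNReal.ofReal ((ρ / 2^(j+1))^s * (ρ / 2^j)^(n:ℝ))
        = ENNReal.ofReal (ρ^((n:ℝ)+s) * 2^(-s)) * (ENNReal.ofReal q)^j := by
      intro j
      have e : (ρ / 2^(j+1))^s * (ρ / 2^j)^(n:ℝ) = (ρ^((n:ℝ)+s) * 2^(-s)) * q^j := by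
        rw [div_pow_eq, div_pow_eq, rpow_helper ρ hρ]
        rw [show -((j+1 : ℕ):ℝ) * s + -(j:ℝ) * (n:ℝ) = (-s) + (-((n:ℝ)+s))*(j:ℝ) by push_cast; ring,
          Real.rpow_add two_pos, Real.rpow_mul two_pos.le, Real.rpow_natCast,
          show s + (n:ℝ) = (n:ℝ) + s by ring]
        ring
      rw [e, ENNReal.ofReal_mul (by positivity), ENNReal.ofReal_pow hq0]
    calc ∫⁻ z in closedBall (0 : EuclideanSpace ℝ (Fin n)) ρ, ENNReal.ofReal (‖z‖ ^ s)
        ≤ ∫⁻ z in ({0} ∪ ⋃ j, A j : Set (EuclideanSpace ℝ (Fin n))),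
            ENNReal.ofReal (‖z‖ ^ s) := lintegral_mono_set hsub
      _ ≤ (∫⁻ z in ({0} : Set (EuclideanSpace ℝ (Fin n))), ENNReal.ofReal (‖z‖ ^ s))
            + ∫⁻ z in ⋃ j, A j, ENNReal.ofReal (‖z‖ ^ s) := lintegral_union_le _ _ _
      _ = ∫⁻ z in ⋃ j, A j, ENNReal.ofReal (‖z‖ ^ s) := by
          rw [lintegral_singleton]
          simp [Real.zero_rpow hs.ne]
      _ ≤ ∑' j, ∫⁻ z in A j, ENNReal.ofReal (‖z‖ ^ s) := lintegral_iUnion_le _ _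
      _ ≤ ∑' j, ENNReal.ofReal (ρ^((n:ℝ)+s) * 2^(-s)) * (ENNReal.ofReal q)^j * V := by
          refine ENNReal.tsum_le_tsum fun j => ?_
          rw [← key j]
          exact core n s _ _ (by positivity) hs.le (by positivity)
      _ = ENNReal.ofReal (ρ^((n:ℝ)+s) * 2^(-s)) * V * (1 - ENNReal.ofReal q)⁻¹ := by
          calc ∑' (j : ℕ), ENNReal.ofReal (ρ ^ ((n:ℝ) + s) * 2 ^ (-s)) * ENNReal.ofReal q ^ j * V
              = ∑' (j : ℕ), (ENNReal.ofReal (ρ ^ ((n:ℝ) + s) * 2 ^ (-s)) * V) * ENNReal.ofReal q ^ j :=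
                tsum_congr fun j => by ring
            _ = (ENNReal.ofReal (ρ ^ ((n:ℝ) + s) * 2 ^ (-s)) * V) * ∑' (j:ℕ), ENNReal.ofReal q ^ j :=
                ENNReal.tsum_mul_left
            _ = _ := by rw [ENNReal.tsum_geometric]
      _ = ENNReal.ofReal (ρ ^ ((n:ℝ) + s)) *
            (ENNReal.ofReal (2 ^ (-s)) * V * (1 - ENNReal.ofReal q)⁻¹) := by
          rw [ENNReal.ofReal_mul (Real.rpow_nonneg hρ.le _)]
          ring

lemma exteriorB (n : ℕ) (s : ℝ) (hns : (n:ℝ) + s < 0) :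
    ∃ c : ℝ≥0∞, c ≠ ⊤ ∧ ∀ a : ℝ, 0 < a →
      ∫⁻ z in {z : EuclideanSpace ℝ (Fin n) | a ≤ ‖z‖}, ENNReal.ofReal (‖z‖ ^ s)
        ≤ ENNReal.ofReal (a ^ ((n:ℝ) + s)) * c := by
  have hs : s < 0 := by
    have : (0:ℝ) ≤ (n:ℝ) := Nat.cast_nonneg n
    linarith
  set V := volume (ball (0 : EuclideanSpace ℝ (Fin n)) 1) with hVdef
  have hV : V ≠ ⊤ := measure_ball_lt_top.ne
  set q : ℝ := 2 ^ ((n:ℝ) + s) with hq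
  have hq0 : 0 ≤ q := Real.rpow_nonneg two_pos.le _
  have hq1 : ENNReal.ofReal q < 1 := by
    rw [ENNReal.ofReal_lt_one]
    exact Real.rpow_lt_one_of_one_lt_of_neg one_lt_two hns
  have hsub1 : (1 : ℝ≥0∞) - ENNReal.ofReal q ≠ 0 := (tsub_pos_of_lt hq1).ne'
  refine ⟨ENNReal.ofReal (2 ^ (n:ℝ)) * V * (1 - ENNReal.ofReal q)⁻¹, ?_, ?_⟩
  · exact ENNReal.mul_ne_top (ENNReal.mul_ne_top ENNReal.ofReal_ne_top hV)
      (ENNReal.inv_ne_top.2 hsub1)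
  · intro a ha
    set A : ℕ → Set (EuclideanSpace ℝ (Fin n)) :=
      fun j => {z | a * 2^j ≤ ‖z‖ ∧ ‖z‖ ≤ a * 2^(j+1)} with hA
    have hsub : {z : EuclideanSpace ℝ (Fin n) | a ≤ ‖z‖} ⊆ ⋃ j, A j := by
      intro z hz
      obtain ⟨j, -, h1, h2⟩ := dyadic_up ha hz
      exact mem_iUnion.2 ⟨j, h1, h2⟩
    have key : ∀ j : ℕ, ENNReal.ofReal ((a * 2^j)^s * (a * 2^(j+1))^(n:ℝ))
        = ENNReal.ofReal (a^((n:ℝ)+s) * 2^((n:ℝ))) * (ENNReal.ofReal q)^j := by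
      intro j
      have e : (a * 2^j)^s * (a * 2^(j+1))^(n:ℝ) = (a^((n:ℝ)+s) * 2^((n:ℝ))) * q^j := by
        rw [show (a * 2^j : ℝ) = a * 2^((j:ℕ):ℝ) by rw [Real.rpow_natCast],
          show (a * 2^(j+1) : ℝ) = a * 2^((j+1:ℕ):ℝ) by rw [Real.rpow_natCast],
          rpow_helper a ha]
        rw [show ((j:ℕ):ℝ)*s + ((j+1:ℕ):ℝ)*(n:ℝ) = (n:ℝ) + ((n:ℝ)+s)*(j:ℝ) by push_cast; ring,
          Real.rpow_add two_pos, Real.rpow_mul two_pos.le,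
          Real.rpow_natCast ((2:ℝ) ^ ((n:ℝ)+s)) j,
          show s + (n:ℝ) = (n:ℝ) + s by ring]
        ring
      rw [e, ENNReal.ofReal_mul (by positivity), ENNReal.ofReal_pow hq0]
    calc ∫⁻ z in {z : EuclideanSpace ℝ (Fin n) | a ≤ ‖z‖}, ENNReal.ofReal (‖z‖ ^ s)
        ≤ ∫⁻ z in ⋃ j, A j, ENNReal.ofReal (‖z‖ ^ s) := lintegral_mono_set hsub
      _ ≤ ∑' j, ∫⁻ z in A j, ENNReal.ofReal (‖z‖ ^ s) := lintegral_iUnion_le _ _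
      _ ≤ ∑' j, ENNReal.ofReal (a^((n:ℝ)+s) * 2^((n:ℝ))) * (ENNReal.ofReal q)^j * V := by
          refine ENNReal.tsum_le_tsum fun j => ?_
          rw [← key j]
          exact core n s _ _ (by positivity) hs.le (by positivity)
      _ = ENNReal.ofReal (a^((n:ℝ)+s) * 2^((n:ℝ))) * V * (1 - ENNReal.ofReal q)⁻¹ := by
          calc ∑' (j : ℕ), ENNReal.ofReal (a ^ ((n:ℝ) + s) * 2 ^ ((n:ℝ))) * ENNReal.ofReal q ^ j * V
              = ∑' (j : ℕ), (ENNReal.ofReal (a ^ ((n:ℝ) + s) * 2 ^ ((n:ℝ))) * V) * ENNReal.ofReal q ^ j :=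
                tsum_congr fun j => by ring
            _ = (ENNReal.ofReal (a ^ ((n:ℝ) + s) * 2 ^ ((n:ℝ))) * V) * ∑' (j:ℕ), ENNReal.ofReal q ^ j :=
                ENNReal.tsum_mul_left
            _ = _ := by rw [ENNReal.tsum_geometric]
      _ = ENNReal.ofReal (a ^ ((n:ℝ) + s)) *
            (ENNReal.ofReal (2 ^ (n:ℝ)) * V * (1 - ENNReal.ofReal q)⁻¹) := by
          rw [ENNReal.ofReal_mul (Real.rpow_nonneg ha.le _)]
          ring

lemma annulus_log (n : ℕ) (a b : ℝ) (ha : 0 < a) (hab : a ≤ b) :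
    ∫⁻ z in {z : EuclideanSpace ℝ (Fin n) | a ≤ ‖z‖ ∧ ‖z‖ ≤ b},
        ENNReal.ofReal (‖z‖ ^ (-(n:ℝ)))
      ≤ ENNReal.ofReal ((Real.logb 2 (b/a) + 1) * 2 ^ (n:ℝ))
          * volume (ball (0 : EuclideanSpace ℝ (Fin n)) 1) := by
  set V := volume (ball (0 : EuclideanSpace ℝ (Fin n)) 1) with hVdef
  have hlognn : 0 ≤ Real.logb 2 (b/a) := Real.logb_nonneg one_lt_two ((one_le_div ha).2 hab)
  set N := Nat.floor (Real.logb 2 (b/a)) with hN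
  set B : ℕ → Set (EuclideanSpace ℝ (Fin n)) :=
    fun j => if j ≤ N then {z | a * 2^j ≤ ‖z‖ ∧ ‖z‖ ≤ a * 2^(j+1)} else ∅ with hB
  have hsub : {z : EuclideanSpace ℝ (Fin n) | a ≤ ‖z‖ ∧ ‖z‖ ≤ b} ⊆ ⋃ j, B j := by
    intro z hz
    obtain ⟨j, hlogj, h1, h2⟩ := dyadic_up ha hz.1
    have hzpos : 0 < ‖z‖ := lt_of_lt_of_le ha hz.1
    have hjN : j ≤ N := by
      refine Nat.le_floor (hlogj.trans ?_)
      refine Real.logb_le_logb_of_le one_lt_two (by positivity) ?_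
      gcongr
      exact hz.2
    exact mem_iUnion.2 ⟨j, by rw [hB]; simp only [if_pos hjN]; exact ⟨h1, h2⟩⟩
  have hterm : ∀ j : ℕ, ∫⁻ z in B j, ENNReal.ofReal (‖z‖ ^ (-(n:ℝ)))
      ≤ if j ≤ N then ENNReal.ofReal (2 ^ (n:ℝ)) * V else 0 := by
    intro j
    by_cases hj : j ≤ N
    · rw [hB]; simp only [if_pos hj]
      have hcore := core n (-(n:ℝ)) (a * 2^j) (a * 2^(j+1)) (by positivity)
        (neg_nonpos.2 (Nat.cast_nonneg n)) (by positivity)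
      refine hcore.trans ?_
      have hx : (0:ℝ) < a * 2^j := by positivity
      have e : (a * 2^j) ^ (-(n:ℝ)) * (a * 2^(j+1)) ^ (n:ℝ) = 2 ^ (n:ℝ) := by
        rw [show (a * 2^(j+1) : ℝ) = (a * 2^j) * 2 by ring,
          Real.mul_rpow hx.le two_pos.le, ← mul_assoc, ← Real.rpow_add hx,
          neg_add_cancel, Real.rpow_zero, one_mul]
      rw [e]
    · rw [hB]; simp only [if_neg hj]
      simp
  calc ∫⁻ z in {z : EuclideanSpace ℝ (Fin n) | a ≤ ‖z‖ ∧ ‖z‖ ≤ b},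
          ENNReal.ofReal (‖z‖ ^ (-(n:ℝ)))
      ≤ ∫⁻ z in ⋃ j, B j, ENNReal.ofReal (‖z‖ ^ (-(n:ℝ))) := lintegral_mono_set hsub
    _ ≤ ∑' j, ∫⁻ z in B j, ENNReal.ofReal (‖z‖ ^ (-(n:ℝ))) := lintegral_iUnion_le _ _
    _ ≤ ∑' j : ℕ, (if j ≤ N then ENNReal.ofReal (2 ^ (n:ℝ)) * V else 0) :=
        ENNReal.tsum_le_tsum hterm
    _ = ∑ j ∈ Finset.range (N+1), (if j ≤ N then ENNReal.ofReal (2 ^ (n:ℝ)) * V else 0) := by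
        refine tsum_eq_sum fun j hj => ?_
        rw [if_neg]
        simpa [Nat.lt_succ_iff] using fun h => hj (Finset.mem_range.2 (Nat.lt_succ_of_le h))
    _ = ((N+1 : ℕ) : ℝ≥0∞) * (ENNReal.ofReal (2 ^ (n:ℝ)) * V) := by
        rw [Finset.sum_congr rfl fun j hj => if_pos (Nat.lt_succ_iff.1 (Finset.mem_range.1 hj))]
        rw [Finset.sum_const, Finset.card_range, nsmul_eq_mul]
    _ ≤ ENNReal.ofReal ((Real.logb 2 (b/a) + 1) * 2 ^ (n:ℝ)) * V := by
        rw [← ENNReal.ofReal_natCast (N+1), ← mul_assoc,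
          ← ENNReal.ofReal_mul (show (0:ℝ) ≤ ((N+1 : ℕ) : ℝ) by positivity)]
        refine mul_le_mul_left (ENNReal.ofReal_le_ofReal ?_) V
        refine mul_le_mul_of_nonneg_right ?_ (by positivity)
        push_cast
        linarith [Nat.floor_le hlognn]

lemma piece {α : Type*} [MeasurableSpace α] (μ : Measure α) (S : Set α) (hS : MeasurableSet S)
    (f g : α → ℝ) (c : ℝ) (hc : 0 ≤ c) (hpt : ∀ z ∈ S, f z ≤ c * g z) :
    ∫⁻ z in S, ENNReal.ofReal (f z) ∂μ
      ≤ ENNReal.ofReal c * ∫⁻ z in S, ENNReal.ofReal (g z) ∂μ := by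
  rw [← lintegral_const_mul' _ _ ENNReal.ofReal_ne_top]
  refine setLIntegral_mono' hS fun z hz => ?_
  rw [← ENNReal.ofReal_mul hc]
  exact ENNReal.ofReal_le_ofReal (hpt z hz)

lemma measS2 (n : ℕ) (w : EuclideanSpace ℝ (Fin n)) (ρ : ℝ) :
    MeasurableSet {z : EuclideanSpace ℝ (Fin n) | ‖z + w‖ ≤ ρ} := by
  have : {z : EuclideanSpace ℝ (Fin n) | ‖z + w‖ ≤ ρ}
      = (fun z : EuclideanSpace ℝ (Fin n) => z + w) ⁻¹' (closedBall 0 ρ) := by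
    ext z; simp [mem_closedBall, dist_eq_norm, sub_neg_eq_add]
  rw [this]
  exact (measurable_add_const w) measurableSet_closedBall

lemma trans_int (n : ℕ) (w : EuclideanSpace ℝ (Fin n)) (ρ s : ℝ) :
    ∫⁻ z in {z : EuclideanSpace ℝ (Fin n) | ‖z + w‖ ≤ ρ}, ENNReal.ofReal (‖z + w‖ ^ s)
      = ∫⁻ z in closedBall (0 : EuclideanSpace ℝ (Fin n)) ρ, ENNReal.ofReal (‖z‖ ^ s) := by
  rw [← lintegral_indicator (measS2 n w ρ), ← lintegral_indicator measurableSet_closedBall,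
    ← lintegral_add_right_eq_self
      (fun z => (closedBall (0 : EuclideanSpace ℝ (Fin n)) ρ).indicator
        (fun y => ENNReal.ofReal (‖y‖ ^ s)) z) w]
  congr 1
  ext z
  by_cases h : ‖z + w‖ ≤ ρ
  · rw [Set.indicator_of_mem (by exact h : z ∈ {z : EuclideanSpace ℝ (Fin n) | ‖z + w‖ ≤ ρ}),
      Set.indicator_of_mem (mem_closedBall_zero_iff.2 h)]
  · rw [Set.indicator_of_notMem (by exact h), Set.indicator_of_notMem (by
      simpa [mem_closedBall_zero_iff] using h)]

lemma norm_tri1 {n : ℕ} (z w : EuclideanSpace ℝ (Fin n)) : ‖w‖ ≤ ‖z + w‖ + ‖z‖ := by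
  calc ‖w‖ = ‖(z + w) - z‖ := by congr 1; abel
    _ ≤ ‖z + w‖ + ‖z‖ := norm_sub_le _ _

lemma norm_tri2 {n : ℕ} (z w : EuclideanSpace ℝ (Fin n)) : ‖z‖ ≤ ‖z + w‖ + ‖w‖ := by
  calc ‖z‖ = ‖(z + w) - w‖ := by congr 1; abel
    _ ≤ ‖z + w‖ + ‖w‖ := norm_sub_le _ _

section Main

variable {n : ℕ}

lemma branch4 (n : ℕ) (hn : 3 ≤ n) (hn4 : 4 ≤ n) (K : ℝ) :
    ∃ C > (0:ℝ), ∀ w : EuclideanSpace ℝ (Fin n), 0 < ‖w‖ → ‖w‖ ≤ 1/2 →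
      (∫⁻ z in {z : EuclideanSpace ℝ (Fin n) | ‖z‖ ≤ K},
          ENNReal.ofReal (‖z‖ ^ ((2 : ℝ) - n) * ‖z + w‖ ^ ((1 : ℝ) - n)))
        ≤ ENNReal.ofReal (C * ‖w‖ ^ ((3 : ℝ) - n)) := by
  have hnR : (4:ℝ) ≤ (n:ℝ) := by exact_mod_cast hn4
  obtain ⟨cA, hcA, HA⟩ := small_ball n ((2:ℝ) - n) (by linarith) (by linarith)
  obtain ⟨cA', hcA', HA'⟩ := small_ball n ((1:ℝ) - n) (by linarith) (by linarith)
  obtain ⟨cB, hcB, HB⟩ := exteriorB n ((3:ℝ) - 2*n) (by linarith)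
  set D : ℝ≥0∞ := cA + cA' + ENNReal.ofReal (4 ^ ((n:ℝ)-1)) * cB with hD
  have hDt : D ≠ ⊤ := by
    rw [hD]
    exact ENNReal.add_ne_top.2 ⟨ENNReal.add_ne_top.2 ⟨hcA, hcA'⟩,
      ENNReal.mul_ne_top ENNReal.ofReal_ne_top hcB⟩
  refine ⟨2 ^ ((n:ℝ)-3) * D.toReal + 1, by positivity, ?_⟩
  intro w hw hw2
  set r := ‖w‖ with hr
  set ρ := r / 2 with hρdef
  have hρ : 0 < ρ := by positivity
  set f : EuclideanSpace ℝ (Fin n) → ℝ :=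
    fun z => ‖z‖ ^ ((2 : ℝ) - n) * ‖z + w‖ ^ ((1 : ℝ) - n) with hf
  set S1 := closedBall (0 : EuclideanSpace ℝ (Fin n)) ρ with hS1def
  set S2 := {z : EuclideanSpace ℝ (Fin n) | ‖z + w‖ ≤ ρ} with hS2def
  set S3 := {z : EuclideanSpace ℝ (Fin n) | ρ ≤ ‖z‖ ∧ ρ ≤ ‖z + w‖} with hS3def
  have hS3m : MeasurableSet S3 := by
    rw [hS3def]
    exact (measurable_norm measurableSet_Ici).inter
      ((measurable_norm.comp (measurable_add_const w)) measurableSet_Ici)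
  have hcover : {z : EuclideanSpace ℝ (Fin n) | ‖z‖ ≤ K} ⊆ S1 ∪ S2 ∪ S3 := by
    intro z _
    by_cases h1 : ‖z‖ ≤ ρ
    · exact Or.inl (Or.inl (mem_closedBall_zero_iff.2 h1))
    by_cases h2 : ‖z + w‖ ≤ ρ
    · exact Or.inl (Or.inr h2)
    · exact Or.inr ⟨le_of_not_ge h1, le_of_not_ge h2⟩
  -- pointwise bounds
  have hpt1 : ∀ z ∈ S1, f z ≤ ρ ^ ((1:ℝ) - n) * ‖z‖ ^ ((2:ℝ) - n) := by
    intro z hz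
    have hz' : ‖z‖ ≤ ρ := mem_closedBall_zero_iff.1 hz
    have h1 : ρ ≤ ‖z + w‖ := by
      have := norm_tri1 z w; rw [← hr] at this; linarith
    have h2 : ‖z + w‖ ^ ((1:ℝ) - n) ≤ ρ ^ ((1:ℝ) - n) :=
      Real.rpow_le_rpow_of_nonpos hρ h1 (by linarith)
    calc f z ≤ ‖z‖ ^ ((2:ℝ) - n) * ρ ^ ((1:ℝ) - n) :=
          mul_le_mul_of_nonneg_left h2 (Real.rpow_nonneg (norm_nonneg z) _)
      _ = _ := mul_comm _ _
  have hpt2 : ∀ z ∈ S2, f z ≤ ρ ^ ((2:ℝ) - n) * ‖z + w‖ ^ ((1:ℝ) - n) := by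
    intro z hz
    have hz' : ‖z + w‖ ≤ ρ := hz
    have h1 : ρ ≤ ‖z‖ := by
      have := norm_tri1 z w; rw [← hr] at this; linarith
    have h2 : ‖z‖ ^ ((2:ℝ) - n) ≤ ρ ^ ((2:ℝ) - n) :=
      Real.rpow_le_rpow_of_nonpos hρ h1 (by linarith)
    exact mul_le_mul_of_nonneg_right h2 (Real.rpow_nonneg (norm_nonneg _) _)
  have hpt3 : ∀ z ∈ S3, f z ≤ 4 ^ ((n:ℝ) - 1) * ‖z‖ ^ ((3:ℝ) - 2*n) := by
    intro z hz
    obtain ⟨hz1, hz2⟩ := hz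
    have hzpos : 0 < ‖z‖ := lt_of_lt_of_le hρ hz1
    have hclaim : ‖z‖ / 4 ≤ ‖z + w‖ := by
      by_cases hc : ‖z‖ ≤ 2 * r
      · linarith
      · have := norm_tri2 z w; rw [← hr] at this; linarith
    have h2 : ‖z + w‖ ^ ((1:ℝ) - n) ≤ (‖z‖ / 4) ^ ((1:ℝ) - n) :=
      Real.rpow_le_rpow_of_nonpos (by positivity) hclaim (by linarith)
    have h3 : (‖z‖ / 4) ^ ((1:ℝ) - n) = ‖z‖ ^ ((1:ℝ) - n) * 4 ^ ((n:ℝ) - 1) := by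
      rw [Real.div_rpow hzpos.le (by norm_num), div_eq_mul_inv, ← Real.rpow_neg (by norm_num),
        show -((1:ℝ) - n) = (n:ℝ) - 1 by ring]
    calc f z ≤ ‖z‖ ^ ((2:ℝ) - n) * ((‖z‖ / 4) ^ ((1:ℝ) - n)) :=
          mul_le_mul_of_nonneg_left h2 (Real.rpow_nonneg (norm_nonneg z) _)
      _ = 4 ^ ((n:ℝ) - 1) * (‖z‖ ^ ((2:ℝ) - n) * ‖z‖ ^ ((1:ℝ) - n)) := by rw [h3]; ring
      _ = 4 ^ ((n:ℝ) - 1) * ‖z‖ ^ ((3:ℝ) - 2*n) := by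
          rw [← Real.rpow_add hzpos, show (2:ℝ) - n + ((1:ℝ) - n) = (3:ℝ) - 2*n by ring]
  -- piece bounds
  have T1 : ∫⁻ z in S1, ENNReal.ofReal (f z) ≤ ENNReal.ofReal (ρ ^ ((3:ℝ) - n)) * cA := by
    calc ∫⁻ z in S1, ENNReal.ofReal (f z)
        ≤ ENNReal.ofReal (ρ ^ ((1:ℝ) - n)) *
            ∫⁻ z in S1, ENNReal.ofReal (‖z‖ ^ ((2:ℝ) - n)) :=
          piece volume S1 measurableSet_closedBall f _ _ (Real.rpow_nonneg hρ.le _) hpt1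
      _ ≤ ENNReal.ofReal (ρ ^ ((1:ℝ) - n)) * (ENNReal.ofReal (ρ ^ ((n:ℝ) + ((2:ℝ) - n))) * cA) :=
          mul_le_mul_right (HA ρ hρ) _
      _ = ENNReal.ofReal (ρ ^ ((3:ℝ) - n)) * cA := by
          rw [← mul_assoc, ← ENNReal.ofReal_mul (Real.rpow_nonneg hρ.le _),
            ← Real.rpow_add hρ, show (1:ℝ) - n + ((n:ℝ) + ((2:ℝ) - n)) = (3:ℝ) - n by ring]
  have T2 : ∫⁻ z in S2, ENNReal.ofReal (f z) ≤ ENNReal.ofReal (ρ ^ ((3:ℝ) - n)) * cA' := by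
    calc ∫⁻ z in S2, ENNReal.ofReal (f z)
        ≤ ENNReal.ofReal (ρ ^ ((2:ℝ) - n)) *
            ∫⁻ z in S2, ENNReal.ofReal (‖z + w‖ ^ ((1:ℝ) - n)) :=
          piece volume S2 (measS2 n w ρ) f _ _ (Real.rpow_nonneg hρ.le _) hpt2
      _ = ENNReal.ofReal (ρ ^ ((2:ℝ) - n)) *
            ∫⁻ z in closedBall (0 : EuclideanSpace ℝ (Fin n)) ρ,
              ENNReal.ofReal (‖z‖ ^ ((1:ℝ) - n)) := by rw [trans_int]
      _ ≤ ENNReal.ofReal (ρ ^ ((2:ℝ) - n)) * (ENNReal.ofReal (ρ ^ ((n:ℝ) + ((1:ℝ) - n))) * cA') :=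
          mul_le_mul_right (HA' ρ hρ) _
      _ = ENNReal.ofReal (ρ ^ ((3:ℝ) - n)) * cA' := by
          rw [← mul_assoc, ← ENNReal.ofReal_mul (Real.rpow_nonneg hρ.le _),
            ← Real.rpow_add hρ, show (2:ℝ) - n + ((n:ℝ) + ((1:ℝ) - n)) = (3:ℝ) - n by ring]
  have T3 : ∫⁻ z in S3, ENNReal.ofReal (f z)
      ≤ ENNReal.ofReal (ρ ^ ((3:ℝ) - n)) * (ENNReal.ofReal (4 ^ ((n:ℝ) - 1)) * cB) := by
    calc ∫⁻ z in S3, ENNReal.ofReal (f z)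
        ≤ ENNReal.ofReal (4 ^ ((n:ℝ) - 1)) *
            ∫⁻ z in S3, ENNReal.ofReal (‖z‖ ^ ((3:ℝ) - 2*n)) :=
          piece volume S3 hS3m f _ _ (by positivity) hpt3
      _ ≤ ENNReal.ofReal (4 ^ ((n:ℝ) - 1)) *
            ∫⁻ z in {z : EuclideanSpace ℝ (Fin n) | ρ ≤ ‖z‖},
              ENNReal.ofReal (‖z‖ ^ ((3:ℝ) - 2*n)) :=
          mul_le_mul_right (lintegral_mono_set fun z hz => hz.1) _
      _ ≤ ENNReal.ofReal (4 ^ ((n:ℝ) - 1)) *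
            (ENNReal.ofReal (ρ ^ ((n:ℝ) + ((3:ℝ) - 2*n))) * cB) :=
          mul_le_mul_right (HB ρ hρ) _
      _ = _ := by
          rw [show (n:ℝ) + ((3:ℝ) - 2*n) = (3:ℝ) - n by ring]; ring
  calc ∫⁻ z in {z : EuclideanSpace ℝ (Fin n) | ‖z‖ ≤ K}, ENNReal.ofReal (f z)
      ≤ ∫⁻ z in S1 ∪ S2 ∪ S3, ENNReal.ofReal (f z) := lintegral_mono_set hcover
    _ ≤ (∫⁻ z in S1 ∪ S2, ENNReal.ofReal (f z)) + ∫⁻ z in S3, ENNReal.ofReal (f z) :=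
        lintegral_union_le _ _ _
    _ ≤ ((∫⁻ z in S1, ENNReal.ofReal (f z)) + ∫⁻ z in S2, ENNReal.ofReal (f z))
          + ∫⁻ z in S3, ENNReal.ofReal (f z) :=
        add_le_add_left (lintegral_union_le _ _ _) _
    _ ≤ ENNReal.ofReal (ρ ^ ((3:ℝ) - n)) * cA + ENNReal.ofReal (ρ ^ ((3:ℝ) - n)) * cA'
          + ENNReal.ofReal (ρ ^ ((3:ℝ) - n)) * (ENNReal.ofReal (4 ^ ((n:ℝ) - 1)) * cB) :=
        add_le_add (add_le_add T1 T2) T3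
    _ = ENNReal.ofReal (ρ ^ ((3:ℝ) - n)) * D := by rw [hD]; ring
    _ = ENNReal.ofReal (ρ ^ ((3:ℝ) - n) * D.toReal) := by
        rw [ENNReal.ofReal_mul (Real.rpow_nonneg hρ.le _), ENNReal.ofReal_toReal hDt]
    _ ≤ ENNReal.ofReal ((2 ^ ((n:ℝ)-3) * D.toReal + 1) * r ^ ((3:ℝ) - n)) := by
        refine ENNReal.ofReal_le_ofReal ?_
        have hρr : ρ ^ ((3:ℝ) - n) = r ^ ((3:ℝ) - n) * 2 ^ ((n:ℝ) - 3) := by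
          rw [hρdef, div_eq_mul_inv, Real.mul_rpow hw.le (by norm_num),
            show (2:ℝ)⁻¹ = 2 ^ (-1:ℝ) by rw [Real.rpow_neg_one],
            ← Real.rpow_mul (by norm_num), show (-1:ℝ) * ((3:ℝ) - n) = (n:ℝ) - 3 by ring]
        rw [hρr]
        have h1 : 0 ≤ r ^ ((3:ℝ) - n) := Real.rpow_nonneg hw.le _
        have h2 : 0 ≤ D.toReal := ENNReal.toReal_nonneg
        have h3 : 0 ≤ (2:ℝ) ^ ((n:ℝ) - 3) := by positivity
        nlinarith

end Main

lemma arith_helper (dR g mu t L X : ℝ) (hdR : 0 ≤ dR) (hg : 0 ≤ g) (hmu : 0 ≤ mu)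
    (ht : 1 ≤ t) (hL0 : 0 ≤ L) (hXb : X ≤ mu + t + 1) :
    dR + g*(X+1) ≤ (dR + g*(mu+3))*t + L := by
  have h5 : g*(X+1) ≤ g*(mu + t + 2) := mul_le_mul_of_nonneg_left (by linarith) hg
  nlinarith [mul_nonneg hdR (sub_nonneg.2 ht), mul_nonneg (mul_nonneg hg hmu) (sub_nonneg.2 ht),
    mul_nonneg hg (sub_nonneg.2 ht)]

lemma branch3 (n : ℕ) (hn3 : n = 3) (K : ℝ) (hK : 0 < K) :
    ∃ C > (0:ℝ), ∀ w : EuclideanSpace ℝ (Fin n), 0 < ‖w‖ → ‖w‖ ≤ 1/2 →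
      (∫⁻ z in {z : EuclideanSpace ℝ (Fin n) | ‖z‖ ≤ K},
          ENNReal.ofReal (‖z‖ ^ ((2 : ℝ) - n) * ‖z + w‖ ^ ((1 : ℝ) - n)))
        ≤ ENNReal.ofReal (C * Real.log (1 / ‖w‖)) := by
  have hnR : (n:ℝ) = 3 := by rw [hn3]; norm_num
  obtain ⟨cA, hcA, HA⟩ := small_ball n ((2:ℝ) - n) (by rw [hnR]; norm_num) (by rw [hnR]; norm_num)
  obtain ⟨cA', hcA', HA'⟩ := small_ball n ((1:ℝ) - n) (by rw [hnR]; norm_num) (by rw [hnR]; norm_num)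
  set V := volume (ball (0 : EuclideanSpace ℝ (Fin n)) 1) with hVdef
  have hV : V ≠ ⊤ := measure_ball_lt_top.ne
  set vR := V.toReal with hvR
  have hvR0 : 0 ≤ vR := ENNReal.toReal_nonneg
  set dR := (cA + cA').toReal with hdRdef
  have hdR0 : 0 ≤ dR := ENNReal.toReal_nonneg
  have hsum : cA + cA' = ENNReal.ofReal dR :=
    (ENNReal.ofReal_toReal (ENNReal.add_ne_top.2 ⟨hcA, hcA'⟩)).symm
  set l2 := Real.log 2 with hl2def
  have hl2 : 0 < l2 := Real.log_pos one_lt_two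
  set M := max K 1 with hMdef
  have hM1 : (1:ℝ) ≤ M := le_max_right K 1
  set m := Real.log M with hmdef
  have hm : 0 ≤ m := Real.log_nonneg hM1
  set γ := 4 ^ ((n:ℝ) - 1) * (2 ^ ((n:ℝ)) * vR) with hγdef
  have hγ : 0 ≤ γ := by positivity
  have hμ' : 0 ≤ m / l2 := div_nonneg hm hl2.le
  set C := (dR + γ * (m/l2 + 3)) / l2 + 1 with hCdef
  have hnum : 0 ≤ dR + γ * (m/l2 + 3) := by
    have : 0 ≤ γ * (m/l2 + 3) := mul_nonneg hγ (by linarith)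
    linarith
  have hC : 0 < C := by
    have := div_nonneg hnum hl2.le
    rw [hCdef]; linarith
  refine ⟨C, hC, ?_⟩
  intro w hw hw2
  set r := ‖w‖ with hr
  set ρ := r / 2 with hρdef
  have hρ : 0 < ρ := by positivity
  set L := Real.log (1/r) with hLdef
  have h2r : (2:ℝ) ≤ 1/r := by rw [le_div_iff₀ hw]; linarith
  have hL : l2 ≤ L := by
    rw [hLdef, hl2def]
    exact Real.log_le_log two_pos h2r
  have hLpos : 0 < L := lt_of_lt_of_le hl2 hL
  have ht : 1 ≤ L / l2 := (one_le_div hl2).2 hL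
  set f : EuclideanSpace ℝ (Fin n) → ℝ :=
    fun z => ‖z‖ ^ ((2 : ℝ) - n) * ‖z + w‖ ^ ((1 : ℝ) - n) with hf
  set S1 := closedBall (0 : EuclideanSpace ℝ (Fin n)) ρ with hS1def
  set S2 := {z : EuclideanSpace ℝ (Fin n) | ‖z + w‖ ≤ ρ} with hS2def
  set S3 := {z : EuclideanSpace ℝ (Fin n) | (ρ ≤ ‖z‖ ∧ ρ ≤ ‖z + w‖) ∧ ‖z‖ ≤ K} with hS3def
  have hS3m : MeasurableSet S3 := by
    rw [hS3def]
    exact ((measurable_norm measurableSet_Ici).inter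
      ((measurable_norm.comp (measurable_add_const w)) measurableSet_Ici)).inter
      (measurable_norm measurableSet_Iic)
  have hcover : {z : EuclideanSpace ℝ (Fin n) | ‖z‖ ≤ K} ⊆ S1 ∪ S2 ∪ S3 := by
    intro z hzK
    by_cases h1 : ‖z‖ ≤ ρ
    · exact Or.inl (Or.inl (mem_closedBall_zero_iff.2 h1))
    by_cases h2 : ‖z + w‖ ≤ ρ
    · exact Or.inl (Or.inr h2)
    · exact Or.inr ⟨⟨le_of_not_ge h1, le_of_not_ge h2⟩, hzK⟩
  have hpt1 : ∀ z ∈ S1, f z ≤ ρ ^ ((1:ℝ) - n) * ‖z‖ ^ ((2:ℝ) - n) := by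
    intro z hz
    have hz' : ‖z‖ ≤ ρ := mem_closedBall_zero_iff.1 hz
    have h1 : ρ ≤ ‖z + w‖ := by
      have := norm_tri1 z w; rw [← hr] at this; linarith
    have h2 : ‖z + w‖ ^ ((1:ℝ) - n) ≤ ρ ^ ((1:ℝ) - n) :=
      Real.rpow_le_rpow_of_nonpos hρ h1 (by rw [hnR]; norm_num)
    calc f z ≤ ‖z‖ ^ ((2:ℝ) - n) * ρ ^ ((1:ℝ) - n) :=
          mul_le_mul_of_nonneg_left h2 (Real.rpow_nonneg (norm_nonneg z) _)
      _ = _ := mul_comm _ _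
  have hpt2 : ∀ z ∈ S2, f z ≤ ρ ^ ((2:ℝ) - n) * ‖z + w‖ ^ ((1:ℝ) - n) := by
    intro z hz
    have hz' : ‖z + w‖ ≤ ρ := hz
    have h1 : ρ ≤ ‖z‖ := by
      have := norm_tri1 z w; rw [← hr] at this; linarith
    have h2 : ‖z‖ ^ ((2:ℝ) - n) ≤ ρ ^ ((2:ℝ) - n) :=
      Real.rpow_le_rpow_of_nonpos hρ h1 (by rw [hnR]; norm_num)
    exact mul_le_mul_of_nonneg_right h2 (Real.rpow_nonneg (norm_nonneg _) _)
  have hpt3 : ∀ z ∈ S3, f z ≤ 4 ^ ((n:ℝ) - 1) * ‖z‖ ^ (-(n:ℝ)) := by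
    intro z hz
    obtain ⟨⟨hz1, hz2⟩, hz3⟩ := hz
    have hzpos : 0 < ‖z‖ := lt_of_lt_of_le hρ hz1
    have hclaim : ‖z‖ / 4 ≤ ‖z + w‖ := by
      by_cases hc : ‖z‖ ≤ 2 * r
      · linarith
      · have := norm_tri2 z w; rw [← hr] at this; linarith
    have h2 : ‖z + w‖ ^ ((1:ℝ) - n) ≤ (‖z‖ / 4) ^ ((1:ℝ) - n) :=
      Real.rpow_le_rpow_of_nonpos (by positivity) hclaim (by rw [hnR]; norm_num)
    have h3 : (‖z‖ / 4) ^ ((1:ℝ) - n) = ‖z‖ ^ ((1:ℝ) - n) * 4 ^ ((n:ℝ) - 1) := by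
      rw [Real.div_rpow hzpos.le (by norm_num), div_eq_mul_inv, ← Real.rpow_neg (by norm_num),
        show -((1:ℝ) - n) = (n:ℝ) - 1 by ring]
    calc f z ≤ ‖z‖ ^ ((2:ℝ) - n) * ((‖z‖ / 4) ^ ((1:ℝ) - n)) :=
          mul_le_mul_of_nonneg_left h2 (Real.rpow_nonneg (norm_nonneg z) _)
      _ = 4 ^ ((n:ℝ) - 1) * (‖z‖ ^ ((2:ℝ) - n) * ‖z‖ ^ ((1:ℝ) - n)) := by rw [h3]; ring
      _ = 4 ^ ((n:ℝ) - 1) * ‖z‖ ^ (-(n:ℝ)) := by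
          rw [← Real.rpow_add hzpos, show (2:ℝ) - n + ((1:ℝ) - n) = -(n:ℝ) by rw [hnR]; norm_num]
  have hrpow0 : ρ ^ ((n:ℝ) + ((2:ℝ) - n)) = ρ ^ ((n:ℝ) + ((1:ℝ) - n)) * ρ := by
    rw [show (n:ℝ) + ((2:ℝ) - n) = 2 by ring, show (n:ℝ) + ((1:ℝ) - n) = 1 by ring,
      Real.rpow_two, Real.rpow_one]
    ring
  have T1 : ∫⁻ z in S1, ENNReal.ofReal (f z) ≤ cA := by
    calc ∫⁻ z in S1, ENNReal.ofReal (f z)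
        ≤ ENNReal.ofReal (ρ ^ ((1:ℝ) - n)) *
            ∫⁻ z in S1, ENNReal.ofReal (‖z‖ ^ ((2:ℝ) - n)) :=
          piece volume S1 measurableSet_closedBall f _ _ (Real.rpow_nonneg hρ.le _) hpt1
      _ ≤ ENNReal.ofReal (ρ ^ ((1:ℝ) - n)) * (ENNReal.ofReal (ρ ^ ((n:ℝ) + ((2:ℝ) - n))) * cA) :=
          mul_le_mul_right (HA ρ hρ) _
      _ = ENNReal.ofReal (ρ ^ ((1:ℝ) - n + ((n:ℝ) + ((2:ℝ) - n)))) * cA := by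
          rw [← mul_assoc, ← ENNReal.ofReal_mul (Real.rpow_nonneg hρ.le _), ← Real.rpow_add hρ]
      _ = cA := by
          rw [show (1:ℝ) - n + ((n:ℝ) + ((2:ℝ) - n)) = 0 by rw [hnR]; norm_num,
            Real.rpow_zero, ENNReal.ofReal_one, one_mul]
  have T2 : ∫⁻ z in S2, ENNReal.ofReal (f z) ≤ cA' := by
    calc ∫⁻ z in S2, ENNReal.ofReal (f z)
        ≤ ENNReal.ofReal (ρ ^ ((2:ℝ) - n)) *
            ∫⁻ z in S2, ENNReal.ofReal (‖z + w‖ ^ ((1:ℝ) - n)) :=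
          piece volume S2 (measS2 n w ρ) f _ _ (Real.rpow_nonneg hρ.le _) hpt2
      _ = ENNReal.ofReal (ρ ^ ((2:ℝ) - n)) *
            ∫⁻ z in closedBall (0 : EuclideanSpace ℝ (Fin n)) ρ,
              ENNReal.ofReal (‖z‖ ^ ((1:ℝ) - n)) := by rw [trans_int]
      _ ≤ ENNReal.ofReal (ρ ^ ((2:ℝ) - n)) * (ENNReal.ofReal (ρ ^ ((n:ℝ) + ((1:ℝ) - n))) * cA') :=
          mul_le_mul_right (HA' ρ hρ) _
      _ = ENNReal.ofReal (ρ ^ ((2:ℝ) - n + ((n:ℝ) + ((1:ℝ) - n)))) * cA' := by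
          rw [← mul_assoc, ← ENNReal.ofReal_mul (Real.rpow_nonneg hρ.le _), ← Real.rpow_add hρ]
      _ = cA' := by
          rw [show (2:ℝ) - n + ((n:ℝ) + ((1:ℝ) - n)) = 0 by rw [hnR]; norm_num,
            Real.rpow_zero, ENNReal.ofReal_one, one_mul]
  set X := Real.logb 2 (max K ρ / ρ) with hX
  have hmax1 : (1:ℝ) ≤ max K ρ / ρ := (one_le_div hρ).2 (le_max_right K ρ)
  have hX0 : 0 ≤ X := Real.logb_nonneg one_lt_two hmax1
  have T3 : ∫⁻ z in S3, ENNReal.ofReal (f z)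
      ≤ ENNReal.ofReal (4 ^ ((n:ℝ) - 1)) * (ENNReal.ofReal ((X + 1) * 2 ^ (n:ℝ)) * V) := by
    calc ∫⁻ z in S3, ENNReal.ofReal (f z)
        ≤ ENNReal.ofReal (4 ^ ((n:ℝ) - 1)) *
            ∫⁻ z in S3, ENNReal.ofReal (‖z‖ ^ (-(n:ℝ))) :=
          piece volume S3 hS3m f _ _ (by positivity) hpt3
      _ ≤ ENNReal.ofReal (4 ^ ((n:ℝ) - 1)) *
            ∫⁻ z in {z : EuclideanSpace ℝ (Fin n) | ρ ≤ ‖z‖ ∧ ‖z‖ ≤ max K ρ},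
              ENNReal.ofReal (‖z‖ ^ (-(n:ℝ))) := by
          refine mul_le_mul_right (lintegral_mono_set ?_) _
          intro z hz
          exact ⟨hz.1.1, hz.2.trans (le_max_left K ρ)⟩
      _ ≤ ENNReal.ofReal (4 ^ ((n:ℝ) - 1)) * (ENNReal.ofReal ((X + 1) * 2 ^ (n:ℝ)) * V) :=
          mul_le_mul_right (annulus_log n ρ (max K ρ) hρ (le_max_right K ρ)) _
  -- final combination
  have hVof : V = ENNReal.ofReal vR := (ENNReal.ofReal_toReal hV).symm
  have hXp : 0 ≤ (X + 1) * 2 ^ (n:ℝ) := by positivity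
  have hρ1 : ρ ≤ 1 := by rw [hρdef]; linarith
  have hXb : X ≤ m/l2 + L/l2 + 1 := by
    have hMpos : (0:ℝ) < M := lt_of_lt_of_le zero_lt_one hM1
    have hstep1 : X ≤ Real.logb 2 (M/ρ) := by
      refine Real.logb_le_logb_of_le one_lt_two (lt_of_lt_of_le zero_lt_one hmax1) ?_
      gcongr
      exact max_le_max le_rfl hρ1
    have hMρeq : Real.logb 2 (M/ρ) = (m - Real.log ρ)/l2 := by
      rw [Real.logb, Real.log_div hMpos.ne' hρ.ne']
    have hlogρ : Real.log ρ = Real.log r - l2 := by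
      rw [hρdef, Real.log_div hw.ne' two_ne_zero]
    have hLr : L = -Real.log r := by rw [hLdef, one_div, Real.log_inv]
    have e : (m - (Real.log r - l2))/l2 = m/l2 + L/l2 + 1 := by
      rw [hLr]; field_simp; ring
    rw [hMρeq, hlogρ] at hstep1
    linarith [hstep1, e.le, e.ge]
  have hCL : C * L = (dR + γ*(m/l2+3)) * (L/l2) + L := by
    rw [hCdef]; field_simp
  have hreal : dR + 4 ^ ((n:ℝ)-1) * ((X + 1) * 2 ^ (n:ℝ) * vR) ≤ C * L := by
    have hγX : 4 ^ ((n:ℝ)-1) * ((X + 1) * 2 ^ (n:ℝ) * vR) = γ * (X+1) := by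
      rw [hγdef]; ring
    rw [hγX, hCL]
    exact arith_helper dR γ (m/l2) (L/l2) L X hdR0 hγ hμ' ht hLpos.le hXb
  calc ∫⁻ z in {z : EuclideanSpace ℝ (Fin n) | ‖z‖ ≤ K}, ENNReal.ofReal (f z)
      ≤ ∫⁻ z in S1 ∪ S2 ∪ S3, ENNReal.ofReal (f z) := lintegral_mono_set hcover
    _ ≤ (∫⁻ z in S1 ∪ S2, ENNReal.ofReal (f z)) + ∫⁻ z in S3, ENNReal.ofReal (f z) :=
        lintegral_union_le _ _ _
    _ ≤ ((∫⁻ z in S1, ENNReal.ofReal (f z)) + ∫⁻ z in S2, ENNReal.ofReal (f z))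
          + ∫⁻ z in S3, ENNReal.ofReal (f z) :=
        add_le_add_left (lintegral_union_le _ _ _) _
    _ ≤ (cA + cA') + ENNReal.ofReal (4 ^ ((n:ℝ) - 1)) * (ENNReal.ofReal ((X + 1) * 2 ^ (n:ℝ)) * V) :=
        add_le_add (add_le_add T1 T2) T3
    _ = ENNReal.ofReal (dR + 4 ^ ((n:ℝ)-1) * ((X + 1) * 2 ^ (n:ℝ) * vR)) := by
        rw [hsum, hVof, ← ENNReal.ofReal_mul hXp, ← ENNReal.ofReal_mul (by positivity),
          ← ENNReal.ofReal_add hdR0 (by positivity)]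
    _ ≤ ENNReal.ofReal (C * L) := ENNReal.ofReal_le_ofReal hreal

/-- Full convolution estimate: for `n ≥ 3` and `K > 0` there is `C > 0`
(depending only on `n` and `K`) such that for all `w` with `0 < ‖w‖ ≤ 1/2`,
`∫_{‖z‖ ≤ K} ‖z‖^{2−n} ‖z+w‖^{1−n} dz ≤ C log(1/‖w‖)` if `n = 3`, and
`≤ C ‖w‖^{3−n}` if `n ≥ 4`. -/
theorem stmt_6 (n : ℕ) (hn : 3 ≤ n) (K : ℝ) (hK : 0 < K) :
    ∃ C > (0 : ℝ), ∀ w : EuclideanSpace ℝ (Fin n), 0 < ‖w‖ → ‖w‖ ≤ 1 / 2 →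
      ((n = 3 →
        (∫⁻ z in {z : EuclideanSpace ℝ (Fin n) | ‖z‖ ≤ K},
            ENNReal.ofReal (‖z‖ ^ ((2 : ℝ) - n) * ‖z + w‖ ^ ((1 : ℝ) - n)))
          ≤ ENNReal.ofReal (C * Real.log (1 / ‖w‖))) ∧
       (4 ≤ n →
        (∫⁻ z in {z : EuclideanSpace ℝ (Fin n) | ‖z‖ ≤ K},
            ENNReal.ofReal (‖z‖ ^ ((2 : ℝ) - n) * ‖z + w‖ ^ ((1 : ℝ) - n)))
          ≤ ENNReal.ofReal (C * ‖w‖ ^ ((3 : ℝ) - n)))) := by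
  rcases Nat.lt_or_ge n 4 with h4 | h4
  · have hn3 : n = 3 := by omega
    obtain ⟨C, hC, H⟩ := branch3 n hn3 K hK
    exact ⟨C, hC, fun w hw hw2 => ⟨fun _ => H w hw hw2, fun h => absurd h (by omega)⟩⟩
  · obtain ⟨C, hC, H⟩ := branch4 n hn h4 K
    exact ⟨C, hC, fun w hw hw2 => ⟨fun h => absurd h (by omega), fun _ => H w hw hw2⟩⟩
end

section
/- Let n ≥ 3 and let Ω ⊆ ℝⁿ be a bounded open set. Let A : Ω → ℂⁿ and q̃ : Ω → ℂ be bounded measurable functions, and let C₀ > 0. Suppose G : Ω × Ω → ℂ and H : Ω × Ω → ℂⁿ are measurable functions such that |G(z,y)| ≤ C₀‖z−y‖^{2−n} and ‖H(z,y)‖ ≤ C₀‖z−y‖^{1−n} for all z ≠ y in Ω, and that the integral equation G(x,y) = G₀(x,y) + ∫_Ω G₀(x,z)·( 2i A(z)·H(z,y) − q̃(z)·G(z,y) ) dz holds for all x ≠ y in Ω. Then there exists a constant C > 0 such that for all x, y ∈ Ω with 0 < ‖x−y‖ ≤ 1/2: |G(x,y) − G₀(x,y)| ≤ C·log(1/‖x−y‖)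 if n = 3, and |G(x,y) − G₀(x,y)| ≤ C·‖x−y‖^{3−n} if n ≥ 4. -/
open MeasureTheory
open scoped BigOperators

/-- The standard fundamental solution of `−Δ` in `ℝⁿ`, `n ≥ 3`:
`G₀(x,y) = 1 / ((n−2) Υ_n ‖x−y‖^{n−2})` with `Υ_n = 2 π^{n/2} / Γ(n/2)`. -/
noncomputable def fundamentalSolutionLaplace (n : ℕ)
    (x y : EuclideanSpace ℝ (Fin n)) : ℝ :=
  1 / (((n : ℝ) - 2) * (2 * Real.pi ^ ((n : ℝ) / 2) / Real.Gamma ((n : ℝ) / 2))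
        * ‖x - y‖ ^ ((n : ℝ) - 2))


open MeasureTheory Metric ENNReal



/-- integral of `‖z-c‖^a` over a shell `closedBall t \ ball s`, `a ≤ 0`. -/
lemma shell_bound (c : EuclideanSpace ℝ (Fin n)) {a s t : ℝ} (hs : 0 < s) (hst : s ≤ t)
    (ha : a ≤ 0) :
    ∫⁻ z in (closedBall c t \ ball c s), ENNReal.ofReal (‖z - c‖ ^ a)
      ≤ ENNReal.ofReal (s ^ a * t ^ ((n:ℕ):ℝ)) *
        volume (ball (0 : EuclideanSpace ℝ (Fin n)) 1) := by
  have hmeas : MeasurableSet (closedBall c t \ ball c s) :=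
    measurableSet_closedBall.diff measurableSet_ball
  have h1 : ∫⁻ z in (closedBall c t \ ball c s), ENNReal.ofReal (‖z - c‖ ^ a)
      ≤ ∫⁻ _ in (closedBall c t \ ball c s), ENNReal.ofReal (s ^ a) := by
    refine setLIntegral_mono' hmeas fun z hz => ?_
    refine ENNReal.ofReal_le_ofReal ?_
    have hzs : s ≤ ‖z - c‖ := by
      have := hz.2
      simp only [mem_ball, not_lt, dist_eq_norm] at this
      exact this
    exact Real.rpow_le_rpow_of_nonpos hs hzs ha
  refine h1.trans ?_
  rw [lintegral_const, Measure.restrict_apply_univ]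
  have h2 : volume (closedBall c t \ ball c s) ≤ volume (closedBall c t) :=
    measure_mono Set.diff_subset
  have h3 : volume (closedBall c t)
      = ENNReal.ofReal (t ^ ((n:ℕ):ℝ)) * volume (ball (0 : EuclideanSpace ℝ (Fin n)) 1) := by
    rw [Measure.addHaar_closedBall _ _ (hs.trans_le hst).le, finrank_euclideanSpace_fin,
      Real.rpow_natCast]
  calc ENNReal.ofReal (s ^ a) * volume (closedBall c t \ ball c s)
      ≤ ENNReal.ofReal (s ^ a) * volume (closedBall c t) := by gcongr
    _ = ENNReal.ofReal (s ^ a * t ^ ((n:ℕ):ℝ)) *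
        volume (ball (0 : EuclideanSpace ℝ (Fin n)) 1) := by
        rw [h3, ← mul_assoc, ← ENNReal.ofReal_mul (Real.rpow_nonneg hs.le _)]

-- rpow algebra helper
lemma rpow_div_pow (ρ : ℝ) (hρ : 0 < ρ) (m : ℕ) (b : ℝ) :
    (ρ / 2 ^ m) ^ b = ρ ^ b * (2:ℝ) ^ (-(m:ℝ) * b) := by
  rw [Real.div_rpow hρ.le (by positivity), ← Real.rpow_natCast 2 m,
    ← Real.rpow_mul (by norm_num), div_eq_mul_inv, ← Real.rpow_neg (by norm_num), neg_mul]

lemma rpow_mul_pow (ρ : ℝ) (hρ : 0 < ρ) (m : ℕ) (b : ℝ) :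
    (ρ * 2 ^ m) ^ b = ρ ^ b * (2:ℝ) ^ ((m:ℝ) * b) := by
  rw [Real.mul_rpow hρ.le (by positivity), ← Real.rpow_natCast 2 m,
    ← Real.rpow_mul (by norm_num)]

-- shell term for decreasing dyadic shells in a ball
lemma ball_term_calc {a : ℝ} (ρ : ℝ) (hρ : 0 < ρ) (k : ℕ) (n : ℕ) :
    (ρ / 2 ^ (k+1)) ^ a * (ρ / 2 ^ k) ^ ((n:ℕ):ℝ)
      = (2:ℝ) ^ (-a) * ρ ^ ((n:ℝ) + a) * ((2:ℝ) ^ (-((n:ℝ) + a))) ^ k := by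
  rw [rpow_div_pow ρ hρ _ a, rpow_div_pow ρ hρ _ ((n:ℕ):ℝ),
    ← Real.rpow_natCast ((2:ℝ) ^ (-((n:ℝ) + a))) k, ← Real.rpow_mul (by norm_num)]
  push_cast
  rw [show ρ ^ a * (2:ℝ) ^ (-((k:ℝ)+1) * a) * (ρ ^ ((n:ℕ):ℝ) * (2:ℝ) ^ (-(k:ℝ) * (n:ℝ)))
      = (ρ ^ a * ρ ^ ((n:ℕ):ℝ)) * ((2:ℝ) ^ (-((k:ℝ)+1) * a) * (2:ℝ) ^ (-(k:ℝ) * (n:ℝ))) by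
        push_cast; ring]
  rw [← Real.rpow_add hρ, ← Real.rpow_add (by norm_num : (0:ℝ) < 2)]
  rw [show (2:ℝ) ^ (-a) * ρ ^ ((n:ℝ) + a) * (2:ℝ) ^ (-((n:ℝ) + a) * (k:ℝ))
      = ρ ^ ((n:ℝ) + a) * ((2:ℝ) ^ (-a) * (2:ℝ) ^ (-((n:ℝ) + a) * (k:ℝ))) by ring]
  rw [← Real.rpow_add (by norm_num : (0:ℝ) < 2)]
  push_cast
  ring_nf

-- shell term for increasing dyadic shells in an annulus
lemma annulus_term_calc {a : ℝ} (ρ : ℝ) (hρ : 0 < ρ) (k : ℕ) (n : ℕ) :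
    (ρ * 2 ^ k) ^ a * (ρ * 2 ^ (k+1)) ^ ((n:ℕ):ℝ)
      = (2:ℝ) ^ ((n:ℕ):ℝ) * ρ ^ ((n:ℝ) + a) * ((2:ℝ) ^ ((n:ℝ) + a)) ^ k := by
  rw [rpow_mul_pow ρ hρ _ a, rpow_mul_pow ρ hρ _ ((n:ℕ):ℝ),
    ← Real.rpow_natCast ((2:ℝ) ^ ((n:ℝ) + a)) k, ← Real.rpow_mul (by norm_num)]
  push_cast
  rw [show ρ ^ a * (2:ℝ) ^ ((k:ℝ) * a) * (ρ ^ ((n:ℕ):ℝ) * (2:ℝ) ^ (((k:ℝ)+1) * (n:ℝ)))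
      = (ρ ^ a * ρ ^ ((n:ℕ):ℝ)) * ((2:ℝ) ^ ((k:ℝ) * a) * (2:ℝ) ^ (((k:ℝ)+1) * (n:ℝ))) by
        push_cast; ring]
  rw [← Real.rpow_add hρ, ← Real.rpow_add (by norm_num : (0:ℝ) < 2)]
  rw [show (2:ℝ) ^ ((n:ℕ):ℝ) * ρ ^ ((n:ℝ) + a) * (2:ℝ) ^ (((n:ℝ) + a) * (k:ℝ))
      = ρ ^ ((n:ℝ) + a) * ((2:ℝ) ^ ((n:ℕ):ℝ) * (2:ℝ) ^ (((n:ℝ) + a) * (k:ℝ))) by ring]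
  rw [← Real.rpow_add (by norm_num : (0:ℝ) < 2)]
  push_cast
  ring_nf



lemma ball_cover (c : EuclideanSpace ℝ (Fin n)) {ρ : ℝ} (hρ : 0 < ρ) :
    ball c ρ ⊆ {c} ∪ ⋃ k : ℕ, (closedBall c (ρ / 2 ^ k) \ ball c (ρ / 2 ^ (k+1))) := by
  intro z hz
  rcases eq_or_ne z c with h | h
  · exact Or.inl h
  · right
    have hd : 0 < dist z c := dist_pos.mpr h
    have hex : ∃ k : ℕ, ρ / 2 ^ (k+1) ≤ dist z c := by
      obtain ⟨k, hk⟩ : ∃ k : ℕ, ρ / dist z c < 2 ^ k :=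
        pow_unbounded_of_one_lt _ (by norm_num : (1:ℝ) < 2)
      refine ⟨k, ?_⟩
      rw [div_le_iff₀ (by positivity)]
      rw [div_lt_iff₀ hd] at hk
      nlinarith [pow_pos (by norm_num : (0:ℝ) < 2) k, hd, pow_succ (2:ℝ) k]
    set k₀ := Nat.find hex with hk₀
    have hspec : ρ / 2 ^ (k₀+1) ≤ dist z c := Nat.find_spec hex
    have hup : dist z c ≤ ρ / 2 ^ k₀ := by
      rcases Nat.eq_zero_or_pos k₀ with h0 | h0
      · rw [h0]; simpa using (mem_ball.mp hz).le
      · have := Nat.find_min hex (Nat.pred_lt h0.ne')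
        have hk1 : (Nat.find hex).pred + 1 = k₀ := Nat.succ_pred_eq_of_pos h0
        rw [hk1] at this
        linarith [not_le.mp this]
    exact Set.mem_iUnion.mpr ⟨k₀, ⟨mem_closedBall.mpr hup, fun hb => not_lt.mpr hspec (mem_ball.mp hb)⟩⟩

lemma annulus_cover_nat (c : EuclideanSpace ℝ (Fin n)) {r : ℝ} (hr : 0 < r) :
    {z : EuclideanSpace ℝ (Fin n) | r ≤ dist z c} ⊆
      ⋃ k : ℕ, (closedBall c (r * 2 ^ (k+1)) \ ball c (r * 2 ^ k)) := by
  intro z hz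
  have hz' : r ≤ dist z c := hz
  have hd : 0 < dist z c := lt_of_lt_of_le hr hz'
  have hex : ∃ k : ℕ, dist z c ≤ r * 2 ^ (k+1) := by
    obtain ⟨k, hk⟩ : ∃ k : ℕ, dist z c / r < 2 ^ k :=
      pow_unbounded_of_one_lt _ (by norm_num : (1:ℝ) < 2)
    refine ⟨k, ?_⟩
    rw [div_lt_iff₀ hr] at hk
    nlinarith [pow_pos (by norm_num : (0:ℝ) < 2) k, pow_succ (2:ℝ) k]
  set k₀ := Nat.find hex with hk₀
  have hspec : dist z c ≤ r * 2 ^ (k₀+1) := Nat.find_spec hex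
  have hlow : r * 2 ^ k₀ ≤ dist z c := by
    rcases Nat.eq_zero_or_pos k₀ with h0 | h0
    · rw [h0]; simpa using hz'
    · have := Nat.find_min hex (Nat.pred_lt h0.ne')
      have hk1 : (Nat.find hex).pred + 1 = k₀ := Nat.succ_pred_eq_of_pos h0
      rw [hk1] at this
      linarith [not_le.mp this]
  exact Set.mem_iUnion.mpr ⟨k₀, ⟨mem_closedBall.mpr hspec, fun hb => not_lt.mpr hlow (mem_ball.mp hb)⟩⟩

lemma annulus_cover_fin (c : EuclideanSpace ℝ (Fin n)) {r D : ℝ} (hr : 0 < r) {N : ℕ}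
    (hN1 : 1 ≤ N) (hN : D ≤ r * 2 ^ N) :
    closedBall c D \ ball c r ⊆
      ⋃ k : Fin N, (closedBall c (r * 2 ^ ((k:ℕ)+1)) \ ball c (r * 2 ^ (k:ℕ))) := by
  intro z hz
  have hz1 : dist z c ≤ D := mem_closedBall.mp hz.1
  have hz2 : r ≤ dist z c := not_lt.mp (fun hb => hz.2 (mem_ball.mpr hb))
  have hex : ∃ k : ℕ, dist z c ≤ r * 2 ^ (k+1) := by
    refine ⟨N, ?_⟩
    have : r * 2 ^ N ≤ r * 2 ^ (N+1) := by
      nlinarith [pow_pos (by norm_num : (0:ℝ) < 2) N, pow_succ (2:ℝ) N]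
    linarith
  set k₀ := Nat.find hex with hk₀
  have hspec : dist z c ≤ r * 2 ^ (k₀+1) := Nat.find_spec hex
  have hk₀N : k₀ < N := by
    have : k₀ ≤ N - 1 := Nat.find_le (by
      have hk1 : N - 1 + 1 = N := Nat.succ_pred_eq_of_pos hN1
      rw [hk1]; linarith)
    omega
  have hlow : r * 2 ^ k₀ ≤ dist z c := by
    rcases Nat.eq_zero_or_pos k₀ with h0 | h0
    · rw [h0]; simpa using hz2
    · have := Nat.find_min hex (Nat.pred_lt h0.ne')
      have hk1 : (Nat.find hex).pred + 1 = k₀ := Nat.succ_pred_eq_of_pos h0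
      rw [hk1] at this
      linarith [not_le.mp this]
  exact Set.mem_iUnion.mpr ⟨⟨k₀, hk₀N⟩,
    ⟨mem_closedBall.mpr hspec, fun hb => not_lt.mpr hlow (mem_ball.mp hb)⟩⟩

-- Lemma C: lintegral of ‖z-c‖^a over a ball, -n < a < 0
lemma lintegral_ball_rpow {n : ℕ} {a : ℝ} (ha : -(n:ℝ) < a) (ha0 : a < 0)
    (c : EuclideanSpace ℝ (Fin n)) {ρ : ℝ} (hρ : 0 < ρ) :
    ∫⁻ z in ball c ρ, ENNReal.ofReal (‖z - c‖ ^ a)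
      ≤ ENNReal.ofReal ((2:ℝ) ^ (-a) * (1 - (2:ℝ) ^ (-((n:ℝ) + a)))⁻¹ *
          (volume (ball (0 : EuclideanSpace ℝ (Fin n)) 1)).toReal * ρ ^ ((n:ℝ) + a)) := by
  set κ := volume (ball (0 : EuclideanSpace ℝ (Fin n)) 1) with hκ
  have hκfin : κ ≠ ⊤ := measure_ball_lt_top.ne
  have hna : 0 < (n:ℝ) + a := by linarith
  set t : ℝ := (2:ℝ) ^ (-((n:ℝ) + a)) with ht
  have ht0 : 0 < t := Real.rpow_pos_of_pos (by norm_num) _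
  have ht1 : t < 1 := by
    rw [ht]
    have := Real.rpow_lt_one_of_one_lt_of_neg (by norm_num : (1:ℝ) < 2) (by linarith : -((n:ℝ)+a) < 0)
    exact this
  calc ∫⁻ z in ball c ρ, ENNReal.ofReal (‖z - c‖ ^ a)
      ≤ ∫⁻ z in ({c} ∪ ⋃ k : ℕ, (closedBall c (ρ / 2 ^ k) \ ball c (ρ / 2 ^ (k+1)))),
          ENNReal.ofReal (‖z - c‖ ^ a) := lintegral_mono_set (ball_cover c hρ)
    _ ≤ (∫⁻ z in ({c} : Set _), ENNReal.ofReal (‖z - c‖ ^ a)) +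
        ∫⁻ z in (⋃ k : ℕ, (closedBall c (ρ / 2 ^ k) \ ball c (ρ / 2 ^ (k+1)))),
          ENNReal.ofReal (‖z - c‖ ^ a) := lintegral_union_le _ _ _
    _ ≤ 0 + ∑' k : ℕ, ∫⁻ z in (closedBall c (ρ / 2 ^ k) \ ball c (ρ / 2 ^ (k+1))),
          ENNReal.ofReal (‖z - c‖ ^ a) := by
        gcongr
        · rw [lintegral_singleton]
          simp [Real.zero_rpow ha0.ne]
        · exact lintegral_iUnion_le _ _
    _ ≤ ∑' k : ℕ, ENNReal.ofReal ((2:ℝ)^(-a) * ρ ^ ((n:ℝ)+a)) * (ENNReal.ofReal t) ^ k * κ := by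
        rw [zero_add]
        refine ENNReal.tsum_le_tsum fun k => ?_
        have hterm := shell_bound c (a := a) (s := ρ / 2 ^ (k+1)) (t := ρ / 2 ^ k)
          (by positivity) (by
            gcongr
            · norm_num
            · exact Nat.le_succ k) ha0.le
        refine hterm.trans_eq ?_
        rw [ball_term_calc ρ hρ k n, ENNReal.ofReal_mul (by positivity),
          ENNReal.ofReal_pow ht0.le]
    _ ≤ ENNReal.ofReal ((2:ℝ) ^ (-a) * (1 - (2:ℝ) ^ (-((n:ℝ) + a)))⁻¹ * κ.toReal * ρ ^ ((n:ℝ) + a)) := by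
        rw [ENNReal.tsum_mul_right, ENNReal.tsum_mul_left, ENNReal.tsum_geometric]
        have h1t : (0:ℝ) < 1 - t := by linarith
        have e1 : (1 - ENNReal.ofReal t)⁻¹ = ENNReal.ofReal ((1-t)⁻¹) := by
          rw [← ENNReal.ofReal_one, ← ENNReal.ofReal_sub _ ht0.le,
            ENNReal.ofReal_inv_of_pos h1t]
        rw [e1, ← ENNReal.ofReal_toReal hκfin]
        rw [← ENNReal.ofReal_mul (by positivity), ← ENNReal.ofReal_mul (by positivity)]
        refine ENNReal.ofReal_le_ofReal (le_of_eq ?_)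
        rw [ENNReal.toReal_ofReal ENNReal.toReal_nonneg, ht]
        ring_nf


-- annulus bound for n ≥ 4
lemma annulus_ge4 {n : ℕ} (hn : 4 ≤ n) (c : EuclideanSpace ℝ (Fin n)) {r : ℝ} (hr : 0 < r) :
    ∫⁻ z in {z : EuclideanSpace ℝ (Fin n) | r ≤ dist z c},
        ENNReal.ofReal (‖z - c‖ ^ ((3:ℝ) - 2*n))
      ≤ ENNReal.ofReal ((2:ℝ) ^ ((n:ℕ):ℝ) * 2 *
          (volume (ball (0 : EuclideanSpace ℝ (Fin n)) 1)).toReal * r ^ ((3:ℝ) - n)) := by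
  set κ := volume (ball (0 : EuclideanSpace ℝ (Fin n)) 1) with hκ
  have hκfin : κ ≠ ⊤ := measure_ball_lt_top.ne
  set a : ℝ := (3:ℝ) - 2*n with hadef
  have hn' : (4:ℝ) ≤ (n:ℝ) := by exact_mod_cast hn
  have ha0 : a < 0 := by rw [hadef]; linarith
  have hna : (n:ℝ) + a = 3 - n := by rw [hadef]; ring
  set t : ℝ := (2:ℝ) ^ ((n:ℝ) + a) with ht
  have ht0 : 0 < t := Real.rpow_pos_of_pos (by norm_num) _
  have hthalf : t ≤ 1/2 := by
    rw [ht, hna]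
    calc (2:ℝ) ^ ((3:ℝ) - n) ≤ (2:ℝ) ^ (-1:ℝ) :=
          Real.rpow_le_rpow_of_exponent_le (by norm_num) (by linarith)
      _ = 1/2 := by rw [Real.rpow_neg_one]; norm_num
  calc ∫⁻ z in {z : EuclideanSpace ℝ (Fin n) | r ≤ dist z c}, ENNReal.ofReal (‖z - c‖ ^ a)
      ≤ ∫⁻ z in (⋃ k : ℕ, (closedBall c (r * 2 ^ (k+1)) \ ball c (r * 2 ^ k))),
          ENNReal.ofReal (‖z - c‖ ^ a) := lintegral_mono_set (annulus_cover_nat c hr)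
    _ ≤ ∑' k : ℕ, ∫⁻ z in (closedBall c (r * 2 ^ (k+1)) \ ball c (r * 2 ^ k)),
          ENNReal.ofReal (‖z - c‖ ^ a) := lintegral_iUnion_le _ _
    _ ≤ ∑' k : ℕ, ENNReal.ofReal ((2:ℝ) ^ ((n:ℕ):ℝ) * r ^ ((n:ℝ)+a)) * (ENNReal.ofReal t) ^ k * κ := by
        refine ENNReal.tsum_le_tsum fun k => ?_
        have hterm := shell_bound c (a := a) (s := r * 2 ^ k) (t := r * 2 ^ (k+1))
          (by positivity) (by
            have : (2:ℝ) ^ k ≤ 2 ^ (k+1) := by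
              apply pow_le_pow_right₀ (by norm_num) (Nat.le_succ k)
            nlinarith) ha0.le
        refine hterm.trans_eq ?_
        rw [annulus_term_calc r hr k n, ENNReal.ofReal_mul (by positivity),
          ENNReal.ofReal_pow ht0.le]
    _ ≤ ENNReal.ofReal ((2:ℝ) ^ ((n:ℕ):ℝ) * 2 * κ.toReal * r ^ ((3:ℝ) - n)) := by
        rw [ENNReal.tsum_mul_right, ENNReal.tsum_mul_left, ENNReal.tsum_geometric]
        have h2 : (1 - ENNReal.ofReal t)⁻¹ ≤ 2 := by
          have hx : ENNReal.ofReal t ≤ 1/2 := by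
            calc ENNReal.ofReal t ≤ ENNReal.ofReal (1/2) := ENNReal.ofReal_le_ofReal hthalf
              _ = 1/2 := by rw [ENNReal.ofReal_div_of_pos (by norm_num)]; norm_num
          have : (1:ℝ≥0∞) - 1/2 ≤ 1 - ENNReal.ofReal t := tsub_le_tsub_left hx 1
          have h12 : (1:ℝ≥0∞) - 1/2 = 1/2 := ENNReal.sub_half (by norm_num)
          calc (1 - ENNReal.ofReal t)⁻¹ ≤ ((1:ℝ≥0∞) - 1/2)⁻¹ := ENNReal.inv_le_inv' this
            _ = 2 := by rw [h12]; simp [ENNReal.inv_div]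
        calc ENNReal.ofReal ((2:ℝ) ^ ((n:ℕ):ℝ) * r ^ ((n:ℝ)+a)) * (1 - ENNReal.ofReal t)⁻¹ * κ
            ≤ ENNReal.ofReal ((2:ℝ) ^ ((n:ℕ):ℝ) * r ^ ((n:ℝ)+a)) * 2 * κ := by gcongr
          _ = ENNReal.ofReal ((2:ℝ) ^ ((n:ℕ):ℝ) * 2 * κ.toReal * r ^ ((3:ℝ) - n)) := by
              rw [← ENNReal.ofReal_toReal hκfin, ← hna]
              rw [show (2:ℝ≥0∞) = ENNReal.ofReal 2 by norm_num]
              rw [← ENNReal.ofReal_mul (by positivity), ← ENNReal.ofReal_mul (by positivity),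
                ENNReal.toReal_ofReal ENNReal.toReal_nonneg]
              congr 1
              ring

-- annulus bound for n = 3
lemma annulus_n3 (c : EuclideanSpace ℝ (Fin 3)) {r D : ℝ} (hr : 0 < r) {N : ℕ}
    (hN1 : 1 ≤ N) (hN : D ≤ r * 2 ^ N) :
    ∫⁻ z in closedBall c D \ ball c r, ENNReal.ofReal (‖z - c‖ ^ (-3:ℝ))
      ≤ ENNReal.ofReal ((N:ℝ) * 8 *
          (volume (ball (0 : EuclideanSpace ℝ (Fin 3)) 1)).toReal) := by
  set κ := volume (ball (0 : EuclideanSpace ℝ (Fin 3)) 1) with hκ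
  have hκfin : κ ≠ ⊤ := measure_ball_lt_top.ne
  have hterm8 : ∀ k : ℕ, (r * 2 ^ k) ^ (-3:ℝ) * (r * 2 ^ (k+1)) ^ (((3:ℕ)):ℝ) = 8 := by
    intro k
    have := annulus_term_calc (a := (-3:ℝ)) r hr k 3
    rw [this]
    norm_num
  calc ∫⁻ z in closedBall c D \ ball c r, ENNReal.ofReal (‖z - c‖ ^ (-3:ℝ))
      ≤ ∫⁻ z in (⋃ k : Fin N, (closedBall c (r * 2 ^ ((k:ℕ)+1)) \ ball c (r * 2 ^ (k:ℕ)))),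
          ENNReal.ofReal (‖z - c‖ ^ (-3:ℝ)) :=
        lintegral_mono_set (annulus_cover_fin c hr hN1 hN)
    _ ≤ ∑' k : Fin N, ∫⁻ z in (closedBall c (r * 2 ^ ((k:ℕ)+1)) \ ball c (r * 2 ^ (k:ℕ))),
          ENNReal.ofReal (‖z - c‖ ^ (-3:ℝ)) := lintegral_iUnion_le _ _
    _ ≤ ∑' _ : Fin N, ENNReal.ofReal 8 * κ := by
        refine ENNReal.tsum_le_tsum fun k => ?_
        have hterm := shell_bound c (a := (-3:ℝ)) (s := r * 2 ^ (k:ℕ)) (t := r * 2 ^ ((k:ℕ)+1))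
          (by positivity) (by
            have : (2:ℝ) ^ (k:ℕ) ≤ 2 ^ ((k:ℕ)+1) := by
              apply pow_le_pow_right₀ (by norm_num) (Nat.le_succ _)
            nlinarith) (by norm_num)
        refine hterm.trans_eq ?_
        rw [hterm8 (k:ℕ)]
    _ = (N : ℝ≥0∞) * (ENNReal.ofReal 8 * κ) := by
        rw [tsum_fintype]
        simp [Finset.sum_const, Finset.card_univ, nsmul_eq_mul]
    _ ≤ ENNReal.ofReal ((N:ℝ) * 8 * κ.toReal) := by
        rw [← ENNReal.ofReal_toReal hκfin, ← ENNReal.ofReal_natCast N,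
          ← ENNReal.ofReal_mul (by positivity), ← ENNReal.ofReal_mul (by positivity)]
        refine ENNReal.ofReal_le_ofReal (le_of_eq ?_)
        rw [ENNReal.toReal_ofReal ENNReal.toReal_nonneg]
        ring

-- T1: integral over ball x (r/2)
lemma T1_bound {n : ℕ} (hn : 3 ≤ n) : ∃ K : ℝ, 0 < K ∧
    ∀ x y : EuclideanSpace ℝ (Fin n), 0 < ‖x - y‖ →
    ∫⁻ z in ball x (‖x - y‖/2),
        ENNReal.ofReal (‖x - z‖ ^ ((2:ℝ) - n) * ‖z - y‖ ^ ((1:ℝ) - n))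
      ≤ ENNReal.ofReal (K * (‖x - y‖/2) ^ ((3:ℝ) - n)) := by
  have hn' : (3:ℝ) ≤ (n:ℝ) := by exact_mod_cast hn
  refine ⟨(2:ℝ) ^ (-((2:ℝ) - n)) * (1 - (2:ℝ) ^ (-((n:ℝ) + ((2:ℝ) - n))))⁻¹ *
      (volume (ball (0 : EuclideanSpace ℝ (Fin n)) 1)).toReal + 1, ?_, ?_⟩
  · have h1 : (0:ℝ) < 1 - (2:ℝ) ^ (-((n:ℝ) + ((2:ℝ) - n))) := by
      have : ((n:ℝ) + ((2:ℝ) - n)) = 2 := by ring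
      rw [this]
      have : (2:ℝ) ^ (-2:ℝ) < 1 :=
        Real.rpow_lt_one_of_one_lt_of_neg (by norm_num) (by norm_num)
      linarith
    positivity
  intro x y hr
  have h1 : (0:ℝ) < 1 - (2:ℝ) ^ (-((n:ℝ) + ((2:ℝ) - n))) := by
    have he : ((n:ℝ) + ((2:ℝ) - n)) = 2 := by ring
    rw [he]
    have : (2:ℝ) ^ (-2:ℝ) < 1 :=
      Real.rpow_lt_one_of_one_lt_of_neg (by norm_num) (by norm_num)
    linarith
  have hC1 : (0:ℝ) ≤ (2:ℝ) ^ (-((2:ℝ) - n)) * (1 - (2:ℝ) ^ (-((n:ℝ) + ((2:ℝ) - n))))⁻¹ *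
      (volume (ball (0 : EuclideanSpace ℝ (Fin n)) 1)).toReal :=
    mul_nonneg (mul_nonneg (Real.rpow_nonneg (by norm_num) _) (inv_nonneg.mpr h1.le))
      ENNReal.toReal_nonneg
  set r := ‖x - y‖ with hrdef
  have hr2 : 0 < r/2 := by positivity
  have key : ∀ z ∈ ball x (r/2), ‖x - z‖ ^ ((2:ℝ) - n) * ‖z - y‖ ^ ((1:ℝ) - n)
      ≤ ‖x - z‖ ^ ((2:ℝ) - n) * (r/2) ^ ((1:ℝ) - n) := by
    intro z hz
    have hzy : r/2 ≤ ‖z - y‖ := by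
      have h1 : dist x z < r/2 := mem_ball'.mp hz
      have h2 : dist x y ≤ dist x z + dist z y := dist_triangle x z y
      have h3 : dist x y = r := by rw [dist_eq_norm, hrdef]
      have h4 : dist z y = ‖z - y‖ := dist_eq_norm z y
      linarith
    have := Real.rpow_le_rpow_of_nonpos hr2 hzy (by linarith : (1:ℝ) - n ≤ 0)
    exact mul_le_mul_of_nonneg_left this (Real.rpow_nonneg (norm_nonneg _) _)
  calc ∫⁻ z in ball x (r/2), ENNReal.ofReal (‖x - z‖ ^ ((2:ℝ) - n) * ‖z - y‖ ^ ((1:ℝ) - n))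
      ≤ ∫⁻ z in ball x (r/2),
          ENNReal.ofReal (‖x - z‖ ^ ((2:ℝ) - n)) * ENNReal.ofReal ((r/2) ^ ((1:ℝ) - n)) := by
        refine setLIntegral_mono' measurableSet_ball fun z hz => ?_
        rw [← ENNReal.ofReal_mul (Real.rpow_nonneg (norm_nonneg _) _)]
        exact ENNReal.ofReal_le_ofReal (key z hz)
    _ = (∫⁻ z in ball x (r/2), ENNReal.ofReal (‖x - z‖ ^ ((2:ℝ) - n))) *
          ENNReal.ofReal ((r/2) ^ ((1:ℝ) - n)) := lintegral_mul_const' _ _ ENNReal.ofReal_ne_top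
    _ ≤ ENNReal.ofReal ((2:ℝ) ^ (-((2:ℝ) - n)) * (1 - (2:ℝ) ^ (-((n:ℝ) + ((2:ℝ) - n))))⁻¹ *
          (volume (ball (0 : EuclideanSpace ℝ (Fin n)) 1)).toReal * (r/2) ^ ((n:ℝ) + ((2:ℝ) - n)))
          * ENNReal.ofReal ((r/2) ^ ((1:ℝ) - n)) := by
        gcongr
        have : ∀ z, ‖x - z‖ = ‖z - x‖ := fun z => norm_sub_rev x z
        simp_rw [this]
        exact lintegral_ball_rpow (by linarith) (by linarith) x hr2
    _ ≤ ENNReal.ofReal (((2:ℝ) ^ (-((2:ℝ) - n)) * (1 - (2:ℝ) ^ (-((n:ℝ) + ((2:ℝ) - n))))⁻¹ *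
          (volume (ball (0 : EuclideanSpace ℝ (Fin n)) 1)).toReal + 1) * (r/2) ^ ((3:ℝ) - n)) := by
        rw [← ENNReal.ofReal_mul (by positivity)]
        refine ENNReal.ofReal_le_ofReal ?_
        rw [mul_assoc, ← Real.rpow_add hr2]
        have he : (n:ℝ) + ((2:ℝ) - n) + ((1:ℝ) - n) = (3:ℝ) - n := by ring
        rw [he]
        have hpos : (0:ℝ) ≤ (r/2) ^ ((3:ℝ) - n) := Real.rpow_nonneg hr2.le _
        exact mul_le_mul_of_nonneg_right (by linarith) hpos

-- T2: integral over ball y (r/2)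
lemma T2_bound {n : ℕ} (hn : 3 ≤ n) : ∃ K : ℝ, 0 < K ∧
    ∀ x y : EuclideanSpace ℝ (Fin n), 0 < ‖x - y‖ →
    ∫⁻ z in ball y (‖x - y‖/2),
        ENNReal.ofReal (‖x - z‖ ^ ((2:ℝ) - n) * ‖z - y‖ ^ ((1:ℝ) - n))
      ≤ ENNReal.ofReal (K * (‖x - y‖/2) ^ ((3:ℝ) - n)) := by
  have hn' : (3:ℝ) ≤ (n:ℝ) := by exact_mod_cast hn
  have h1 : (0:ℝ) < 1 - (2:ℝ) ^ (-((n:ℝ) + ((1:ℝ) - n))) := by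
    have he : ((n:ℝ) + ((1:ℝ) - n)) = 1 := by ring
    rw [he]
    have : (2:ℝ) ^ (-1:ℝ) < 1 :=
      Real.rpow_lt_one_of_one_lt_of_neg (by norm_num) (by norm_num)
    linarith
  refine ⟨(2:ℝ) ^ (-((1:ℝ) - n)) * (1 - (2:ℝ) ^ (-((n:ℝ) + ((1:ℝ) - n))))⁻¹ *
      (volume (ball (0 : EuclideanSpace ℝ (Fin n)) 1)).toReal + 1, by positivity, ?_⟩
  intro x y hr
  have hC1 : (0:ℝ) ≤ (2:ℝ) ^ (-((1:ℝ) - n)) * (1 - (2:ℝ) ^ (-((n:ℝ) + ((1:ℝ) - n))))⁻¹ *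
      (volume (ball (0 : EuclideanSpace ℝ (Fin n)) 1)).toReal :=
    mul_nonneg (mul_nonneg (Real.rpow_nonneg (by norm_num) _) (inv_nonneg.mpr h1.le))
      ENNReal.toReal_nonneg
  set r := ‖x - y‖ with hrdef
  have hr2 : 0 < r/2 := by positivity
  have key : ∀ z ∈ ball y (r/2), ‖x - z‖ ^ ((2:ℝ) - n) * ‖z - y‖ ^ ((1:ℝ) - n)
      ≤ (r/2) ^ ((2:ℝ) - n) * ‖z - y‖ ^ ((1:ℝ) - n) := by
    intro z hz
    have hzx : r/2 ≤ ‖x - z‖ := by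
      have h1' : dist y z < r/2 := mem_ball'.mp hz
      have h2 : dist x y ≤ dist x z + dist z y := dist_triangle x z y
      have h3 : dist x y = r := by rw [dist_eq_norm, hrdef]
      have h4 : dist x z = ‖x - z‖ := dist_eq_norm x z
      have h5 : dist z y = dist y z := dist_comm z y
      linarith
    have := Real.rpow_le_rpow_of_nonpos hr2 hzx (by linarith : (2:ℝ) - n ≤ 0)
    exact mul_le_mul_of_nonneg_right this (Real.rpow_nonneg (norm_nonneg _) _)
  calc ∫⁻ z in ball y (r/2), ENNReal.ofReal (‖x - z‖ ^ ((2:ℝ) - n) * ‖z - y‖ ^ ((1:ℝ) - n))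
      ≤ ∫⁻ z in ball y (r/2),
          ENNReal.ofReal ((r/2) ^ ((2:ℝ) - n)) * ENNReal.ofReal (‖z - y‖ ^ ((1:ℝ) - n)) := by
        refine setLIntegral_mono' measurableSet_ball fun z hz => ?_
        rw [← ENNReal.ofReal_mul (Real.rpow_nonneg hr2.le _)]
        exact ENNReal.ofReal_le_ofReal (key z hz)
    _ = ENNReal.ofReal ((r/2) ^ ((2:ℝ) - n)) *
          ∫⁻ z in ball y (r/2), ENNReal.ofReal (‖z - y‖ ^ ((1:ℝ) - n)) :=
        lintegral_const_mul' _ _ ENNReal.ofReal_ne_top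
    _ ≤ ENNReal.ofReal ((r/2) ^ ((2:ℝ) - n)) *
        ENNReal.ofReal ((2:ℝ) ^ (-((1:ℝ) - n)) * (1 - (2:ℝ) ^ (-((n:ℝ) + ((1:ℝ) - n))))⁻¹ *
          (volume (ball (0 : EuclideanSpace ℝ (Fin n)) 1)).toReal *
          (r/2) ^ ((n:ℝ) + ((1:ℝ) - n))) := by
        gcongr
        exact lintegral_ball_rpow (by linarith) (by linarith) y hr2
    _ ≤ ENNReal.ofReal (((2:ℝ) ^ (-((1:ℝ) - n)) * (1 - (2:ℝ) ^ (-((n:ℝ) + ((1:ℝ) - n))))⁻¹ *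
          (volume (ball (0 : EuclideanSpace ℝ (Fin n)) 1)).toReal + 1) * (r/2) ^ ((3:ℝ) - n)) := by
        rw [← ENNReal.ofReal_mul (Real.rpow_nonneg hr2.le _)]
        refine ENNReal.ofReal_le_ofReal ?_
        have hpos : (0:ℝ) ≤ (r/2) ^ ((3:ℝ) - n) := Real.rpow_nonneg hr2.le _
        have he : (r/2) ^ ((2:ℝ) - n) * (r/2) ^ ((n:ℝ) + ((1:ℝ) - n)) = (r/2) ^ ((3:ℝ) - n) := by
          rw [← Real.rpow_add hr2]
          congr 1
          ring
        calc (r/2) ^ ((2:ℝ) - n) * ((2:ℝ) ^ (-((1:ℝ) - n)) *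
              (1 - (2:ℝ) ^ (-((n:ℝ) + ((1:ℝ) - n))))⁻¹ *
              (volume (ball (0 : EuclideanSpace ℝ (Fin n)) 1)).toReal *
              (r/2) ^ ((n:ℝ) + ((1:ℝ) - n)))
            = ((2:ℝ) ^ (-((1:ℝ) - n)) * (1 - (2:ℝ) ^ (-((n:ℝ) + ((1:ℝ) - n))))⁻¹ *
              (volume (ball (0 : EuclideanSpace ℝ (Fin n)) 1)).toReal) *
              ((r/2) ^ ((2:ℝ) - n) * (r/2) ^ ((n:ℝ) + ((1:ℝ) - n))) := by ring
          _ ≤ _ := by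
              rw [he]
              exact mul_le_mul_of_nonneg_right (by linarith) hpos

-- pointwise bound on the annular region
lemma annulus_pointwise {n : ℕ} (hn : 3 ≤ n) (x y z : EuclideanSpace ℝ (Fin n))
    (hr : 0 < ‖x - y‖) (hzx : ‖x - y‖/2 ≤ dist z x) (hzy : ‖x - y‖/2 ≤ dist z y) :
    ‖x - z‖ ^ ((2:ℝ) - n) * ‖z - y‖ ^ ((1:ℝ) - n)
      ≤ (4:ℝ) ^ ((n:ℕ):ℝ) * ‖z - x‖ ^ ((3:ℝ) - 2*n) := by
  have hn' : (3:ℝ) ≤ (n:ℝ) := by exact_mod_cast hn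
  set r := ‖x - y‖ with hrdef
  have hdx' : r/2 ≤ ‖z - x‖ := by rwa [dist_eq_norm] at hzx
  have hdx : 0 < ‖z - x‖ := lt_of_lt_of_le (by positivity : (0:ℝ) < r/2) hdx'
  have hdy : r/2 ≤ ‖z - y‖ := by rwa [dist_eq_norm] at hzy
  have hquarter : ‖z - x‖/4 ≤ ‖z - y‖ := by
    rcases le_or_gt (‖z - x‖) (2*r) with h | h
    · linarith
    · have htri : ‖z - x‖ ≤ ‖z - y‖ + ‖y - x‖ := norm_sub_le_norm_sub_add_norm_sub z y x
      have hyx : ‖y - x‖ = r := by rw [hrdef, norm_sub_rev]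
      linarith
  have h4 : (0:ℝ) < ‖z - x‖/4 := by positivity
  have step1 : ‖z - y‖ ^ ((1:ℝ) - n) ≤ (‖z - x‖/4) ^ ((1:ℝ) - n) :=
    Real.rpow_le_rpow_of_nonpos h4 hquarter (by linarith)
  have step2 : (‖z - x‖/4) ^ ((1:ℝ) - n) ≤ (4:ℝ) ^ ((n:ℕ):ℝ) * ‖z - x‖ ^ ((1:ℝ) - n) := by
    rw [Real.div_rpow hdx.le (by norm_num), div_le_iff₀ (by positivity)]
    rw [show (4:ℝ) ^ ((n:ℕ):ℝ) * ‖z - x‖ ^ ((1:ℝ) - n) * (4:ℝ) ^ ((1:ℝ) - n)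
        = ‖z - x‖ ^ ((1:ℝ) - n) * ((4:ℝ) ^ ((n:ℕ):ℝ) * (4:ℝ) ^ ((1:ℝ) - n)) by ring]
    rw [← Real.rpow_add (by norm_num : (0:ℝ) < 4)]
    nth_rewrite 1 [show ‖z - x‖ ^ ((1:ℝ) - n) = ‖z - x‖ ^ ((1:ℝ) - n) * 1 by ring]
    refine mul_le_mul_of_nonneg_left ?_ (Real.rpow_nonneg hdx.le _)
    exact Real.one_le_rpow (by norm_num) (by push_cast; linarith)
  have hxz : ‖x - z‖ = ‖z - x‖ := norm_sub_rev x z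
  calc ‖x - z‖ ^ ((2:ℝ) - n) * ‖z - y‖ ^ ((1:ℝ) - n)
      ≤ ‖x - z‖ ^ ((2:ℝ) - n) * ((4:ℝ) ^ ((n:ℕ):ℝ) * ‖z - x‖ ^ ((1:ℝ) - n)) := by
        refine mul_le_mul_of_nonneg_left (step1.trans step2) (Real.rpow_nonneg (norm_nonneg _) _)
    _ = (4:ℝ) ^ ((n:ℕ):ℝ) * (‖z - x‖ ^ ((2:ℝ) - n) * ‖z - x‖ ^ ((1:ℝ) - n)) := by
        rw [hxz]; ring
    _ = (4:ℝ) ^ ((n:ℕ):ℝ) * ‖z - x‖ ^ ((3:ℝ) - 2*n) := by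
        rw [← Real.rpow_add hdx]
        congr 1
        ring

-- T3 for n ≥ 4
lemma T3_ge4 {n : ℕ} (hn : 4 ≤ n) {D : ℝ} (hD : 1 ≤ D) : ∃ K : ℝ, 0 < K ∧
    ∀ x y : EuclideanSpace ℝ (Fin n), 0 < ‖x - y‖ → ‖x - y‖ ≤ 1/2 →
    ∫⁻ z in (closedBall x D \ ball x (‖x - y‖/2)) \ ball y (‖x - y‖/2),
        ENNReal.ofReal (‖x - z‖ ^ ((2:ℝ) - n) * ‖z - y‖ ^ ((1:ℝ) - n))
      ≤ ENNReal.ofReal (K * ‖x - y‖ ^ ((3:ℝ) - n)) := by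
  have hn' : (4:ℝ) ≤ (n:ℝ) := by exact_mod_cast hn
  refine ⟨(4:ℝ) ^ ((n:ℕ):ℝ) * ((2:ℝ) ^ ((n:ℕ):ℝ) * 2 *
      (volume (ball (0 : EuclideanSpace ℝ (Fin n)) 1)).toReal) * (2:ℝ) ^ ((n:ℝ) - 3) + 1,
      by positivity, ?_⟩
  intro x y hr hr2
  set r := ‖x - y‖ with hrdef
  set S := (closedBall x D \ ball x (r/2)) \ ball y (r/2) with hS
  have hSm : MeasurableSet S :=
    ((measurableSet_closedBall.diff measurableSet_ball).diff measurableSet_ball)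
  have hmem : ∀ z ∈ S, r/2 ≤ dist z x ∧ r/2 ≤ dist z y := by
    intro z hz
    constructor
    · have := hz.1.2; simp only [mem_ball, not_lt] at this; exact this
    · have := hz.2; simp only [mem_ball, not_lt] at this; exact this
  calc ∫⁻ z in S, ENNReal.ofReal (‖x - z‖ ^ ((2:ℝ) - n) * ‖z - y‖ ^ ((1:ℝ) - n))
      ≤ ∫⁻ z in S, ENNReal.ofReal ((4:ℝ) ^ ((n:ℕ):ℝ)) *
          ENNReal.ofReal (‖z - x‖ ^ ((3:ℝ) - 2*n)) := by
        refine setLIntegral_mono' hSm fun z hz => ?_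
        rw [← ENNReal.ofReal_mul (Real.rpow_nonneg (by norm_num) _)]
        exact ENNReal.ofReal_le_ofReal
          (annulus_pointwise (by omega) x y z hr (hmem z hz).1 (hmem z hz).2)
    _ = ENNReal.ofReal ((4:ℝ) ^ ((n:ℕ):ℝ)) *
          ∫⁻ z in S, ENNReal.ofReal (‖z - x‖ ^ ((3:ℝ) - 2*n)) :=
        lintegral_const_mul' _ _ ENNReal.ofReal_ne_top
    _ ≤ ENNReal.ofReal ((4:ℝ) ^ ((n:ℕ):ℝ)) *
          ∫⁻ z in {z : EuclideanSpace ℝ (Fin n) | r/2 ≤ dist z x},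
            ENNReal.ofReal (‖z - x‖ ^ ((3:ℝ) - 2*n)) := by
        gcongr
        exact fun z hz => (hmem z hz).1
    _ ≤ ENNReal.ofReal ((4:ℝ) ^ ((n:ℕ):ℝ)) *
          ENNReal.ofReal ((2:ℝ) ^ ((n:ℕ):ℝ) * 2 *
            (volume (ball (0 : EuclideanSpace ℝ (Fin n)) 1)).toReal * (r/2) ^ ((3:ℝ) - n)) := by
        gcongr
        exact annulus_ge4 hn x (by positivity)
    _ ≤ ENNReal.ofReal (((4:ℝ) ^ ((n:ℕ):ℝ) * ((2:ℝ) ^ ((n:ℕ):ℝ) * 2 *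
          (volume (ball (0 : EuclideanSpace ℝ (Fin n)) 1)).toReal) * (2:ℝ) ^ ((n:ℝ) - 3) + 1) *
          r ^ ((3:ℝ) - n)) := by
        rw [← ENNReal.ofReal_mul (by positivity)]
        refine ENNReal.ofReal_le_ofReal ?_
        have hhalf : (r/2) ^ ((3:ℝ) - n) = r ^ ((3:ℝ) - n) * (2:ℝ) ^ ((n:ℝ) - 3) := by
          rw [Real.div_rpow hr.le (by norm_num), div_eq_mul_inv,
            ← Real.rpow_neg (by norm_num : (0:ℝ) ≤ 2)]
          congr 1
          ring
        rw [hhalf]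
        have hrpos : (0:ℝ) ≤ r ^ ((3:ℝ) - n) := Real.rpow_nonneg hr.le _
        nlinarith [mul_nonneg (mul_nonneg (Real.rpow_nonneg (by norm_num : (0:ℝ) ≤ 4) ((n:ℕ):ℝ))
            (by positivity : (0:ℝ) ≤ (2:ℝ) ^ ((n:ℕ):ℝ) * 2 *
              (volume (ball (0 : EuclideanSpace ℝ (Fin n)) 1)).toReal))
            (Real.rpow_nonneg (by norm_num : (0:ℝ) ≤ 2) ((n:ℝ) - 3)), hrpos]

-- T3 for n = 3
lemma T3_n3 {D : ℝ} (hD : 1 ≤ D) : ∃ K : ℝ, 0 < K ∧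
    ∀ x y : EuclideanSpace ℝ (Fin 3), 0 < ‖x - y‖ → ‖x - y‖ ≤ 1/2 →
    ∫⁻ z in (closedBall x D \ ball x (‖x - y‖/2)) \ ball y (‖x - y‖/2),
        ENNReal.ofReal (‖x - z‖ ^ ((2:ℝ) - (3:ℕ)) * ‖z - y‖ ^ ((1:ℝ) - (3:ℕ)))
      ≤ ENNReal.ofReal (K * Real.log (1/‖x - y‖)) := by
  have hlog2 : (0:ℝ) < Real.log 2 := Real.log_pos (by norm_num)
  have hlog2D : Real.log 2 ≤ Real.log (4*D) :=
    Real.log_le_log (by norm_num) (by linarith)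
  set cD : ℝ := (Real.log (4*D) + 4*Real.log 2) / (Real.log 2)^2 with hcD
  have hcD0 : 0 < cD := div_pos (by linarith) (by positivity)
  refine ⟨(4:ℝ) ^ (((3:ℕ)):ℝ) * 8 *
      (volume (ball (0 : EuclideanSpace ℝ (Fin 3)) 1)).toReal * cD + 1, ?_, ?_⟩
  · have h4 : (0:ℝ) ≤ (4:ℝ) ^ (((3:ℕ)):ℝ) := Real.rpow_nonneg (by norm_num) _
    have hκ : (0:ℝ) ≤ (volume (ball (0 : EuclideanSpace ℝ (Fin 3)) 1)).toReal :=
      ENNReal.toReal_nonneg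
    nlinarith [mul_nonneg (mul_nonneg (mul_nonneg h4 (by norm_num : (0:ℝ) ≤ 8)) hκ) hcD0.le]
  intro x y hr hr2
  set r := ‖x - y‖ with hrdef
  set L : ℝ := Real.log (1/r) with hL
  have hLlog2 : Real.log 2 ≤ L := by
    rw [hL]
    refine Real.log_le_log (by norm_num) ?_
    rw [le_one_div (by norm_num) hr]
    exact hr2
  have hL0 : 0 < L := lt_of_lt_of_le hlog2 hLlog2
  -- the number of dyadic shells
  set tt : ℝ := Real.logb 2 (D / (r/2)) with htt
  have htt4 : (4:ℝ) ≤ D / (r/2) := by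
    rw [le_div_iff₀ (by positivity)]
    linarith
  have htt0 : 0 ≤ tt := Real.logb_nonneg (by norm_num) (by linarith)
  set N : ℕ := ⌈tt⌉₊ + 1 with hN
  have hN1 : 1 ≤ N := by omega
  have hNtt : tt ≤ (N:ℝ) := by
    rw [hN]
    push_cast
    linarith [Nat.le_ceil tt]
  have hNup : (N:ℝ) ≤ tt + 2 := by
    rw [hN]
    push_cast
    linarith [Nat.ceil_lt_add_one htt0]
  have hDN : D ≤ (r/2) * 2 ^ N := by
    have h2N : D / (r/2) ≤ (2:ℝ) ^ N := by
      calc D / (r/2) = (2:ℝ) ^ tt := (Real.rpow_logb (by positivity) (by norm_num)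
            (by linarith)).symm
        _ ≤ (2:ℝ) ^ ((N:ℕ):ℝ) := Real.rpow_le_rpow_of_exponent_le (by norm_num) hNtt
        _ = (2:ℝ) ^ N := Real.rpow_natCast 2 N
    rw [div_le_iff₀ (by positivity)] at h2N
    linarith [h2N]
  -- bound N by a multiple of L
  have hNL : (N:ℝ) ≤ cD * L := by
    have httval : tt = (Real.log (4*D) + L - Real.log 2) / Real.log 2 := by
      rw [htt, Real.logb, hL]
      congr 1
      rw [show D / (r/2) = 4*D * (1/r) / 2 by field_simp; ring]
      rw [Real.log_div (by positivity) (by norm_num),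
        Real.log_mul (by positivity) (by positivity)]
    have h2 : cD * L - (tt + 2)
        = (Real.log (4*D) * (L - Real.log 2) + 3*Real.log 2 * L - (Real.log 2)^2) /
          (Real.log 2)^2 := by
      rw [hcD, httval]
      field_simp
      ring
    have h1 : 0 ≤ Real.log (4*D) * (L - Real.log 2) := mul_nonneg (by linarith) (by linarith)
    have h4 : 0 ≤ cD * L - (tt+2) := by
      rw [h2]
      refine div_nonneg (by nlinarith) (by positivity)
    linarith
  set S := (closedBall x D \ ball x (r/2)) \ ball y (r/2) with hS
  have hSm : MeasurableSet S :=
    ((measurableSet_closedBall.diff measurableSet_ball).diff measurableSet_ball)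
  have hmem : ∀ z ∈ S, r/2 ≤ dist z x ∧ r/2 ≤ dist z y := by
    intro z hz
    constructor
    · have := hz.1.2; simp only [mem_ball, not_lt] at this; exact this
    · have := hz.2; simp only [mem_ball, not_lt] at this; exact this
  calc ∫⁻ z in S, ENNReal.ofReal (‖x - z‖ ^ ((2:ℝ) - (3:ℕ)) * ‖z - y‖ ^ ((1:ℝ) - (3:ℕ)))
      ≤ ∫⁻ z in S, ENNReal.ofReal ((4:ℝ) ^ (((3:ℕ)):ℝ)) *
          ENNReal.ofReal (‖z - x‖ ^ ((-3):ℝ)) := by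
        refine setLIntegral_mono' hSm fun z hz => ?_
        rw [← ENNReal.ofReal_mul (Real.rpow_nonneg (by norm_num) _)]
        have := annulus_pointwise (le_refl 3) x y z hr (hmem z hz).1 (hmem z hz).2
        rw [show ((3:ℝ) - 2*((3:ℕ):ℝ)) = (-3:ℝ) by norm_num] at this
        exact ENNReal.ofReal_le_ofReal this
    _ = ENNReal.ofReal ((4:ℝ) ^ (((3:ℕ)):ℝ)) *
          ∫⁻ z in S, ENNReal.ofReal (‖z - x‖ ^ ((-3):ℝ)) :=
        lintegral_const_mul' _ _ ENNReal.ofReal_ne_top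
    _ ≤ ENNReal.ofReal ((4:ℝ) ^ (((3:ℕ)):ℝ)) *
          ∫⁻ z in closedBall x D \ ball x (r/2), ENNReal.ofReal (‖z - x‖ ^ ((-3):ℝ)) := by
        gcongr
        exact Set.diff_subset
    _ ≤ ENNReal.ofReal ((4:ℝ) ^ (((3:ℕ)):ℝ)) *
          ENNReal.ofReal ((N:ℝ) * 8 *
            (volume (ball (0 : EuclideanSpace ℝ (Fin 3)) 1)).toReal) := by
        gcongr
        exact annulus_n3 x (by positivity) hN1 hDN
    _ ≤ ENNReal.ofReal (((4:ℝ) ^ (((3:ℕ)):ℝ) * 8 *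
          (volume (ball (0 : EuclideanSpace ℝ (Fin 3)) 1)).toReal * cD + 1) * L) := by
        rw [← ENNReal.ofReal_mul (Real.rpow_nonneg (by norm_num) _)]
        refine ENNReal.ofReal_le_ofReal ?_
        have hκ : (0:ℝ) ≤ (volume (ball (0 : EuclideanSpace ℝ (Fin 3)) 1)).toReal :=
          ENNReal.toReal_nonneg
        have h64 : (0:ℝ) ≤ (4:ℝ) ^ (((3:ℕ)):ℝ) := Real.rpow_nonneg (by norm_num) _
        nlinarith [mul_nonneg (mul_nonneg h64 (by norm_num : (0:ℝ) ≤ 8)) hκ, hNL, hL0]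

-- the key Riesz composition estimate
lemma key_conv {n : ℕ} (hn : 3 ≤ n) {D : ℝ} (hD : 1 ≤ D) : ∃ K : ℝ, 0 < K ∧
    ∀ x y : EuclideanSpace ℝ (Fin n), 0 < ‖x - y‖ → ‖x - y‖ ≤ 1/2 →
    ∫⁻ z in ball x D, ENNReal.ofReal (‖x - z‖ ^ ((2:ℝ) - n) * ‖z - y‖ ^ ((1:ℝ) - n))
      ≤ ENNReal.ofReal (K * (if n = 3 then Real.log (1/‖x - y‖) else ‖x - y‖ ^ ((3:ℝ) - n))) := by
  obtain ⟨K1, hK1, hT1⟩ := T1_bound (n := n) hn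
  obtain ⟨K2, hK2, hT2⟩ := T2_bound (n := n) hn
  have hcover : ∀ x y : EuclideanSpace ℝ (Fin n), ball x D ⊆
      ball x (‖x - y‖/2) ∪ (ball y (‖x - y‖/2) ∪
        ((closedBall x D \ ball x (‖x - y‖/2)) \ ball y (‖x - y‖/2))) := by
    intro x y z hz
    by_cases h1 : z ∈ ball x (‖x - y‖/2)
    · exact Or.inl h1
    by_cases h2 : z ∈ ball y (‖x - y‖/2)
    · exact Or.inr (Or.inl h2)
    exact Or.inr (Or.inr ⟨⟨ball_subset_closedBall hz, h1⟩, h2⟩)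
  have hsplit : ∀ x y : EuclideanSpace ℝ (Fin n),
      ∫⁻ z in ball x D, ENNReal.ofReal (‖x - z‖ ^ ((2:ℝ) - n) * ‖z - y‖ ^ ((1:ℝ) - n))
      ≤ (∫⁻ z in ball x (‖x - y‖/2),
            ENNReal.ofReal (‖x - z‖ ^ ((2:ℝ) - n) * ‖z - y‖ ^ ((1:ℝ) - n)))
        + ((∫⁻ z in ball y (‖x - y‖/2),
            ENNReal.ofReal (‖x - z‖ ^ ((2:ℝ) - n) * ‖z - y‖ ^ ((1:ℝ) - n)))
          + ∫⁻ z in (closedBall x D \ ball x (‖x - y‖/2)) \ ball y (‖x - y‖/2),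
            ENNReal.ofReal (‖x - z‖ ^ ((2:ℝ) - n) * ‖z - y‖ ^ ((1:ℝ) - n))) := by
    intro x y
    calc ∫⁻ z in ball x D, ENNReal.ofReal (‖x - z‖ ^ ((2:ℝ) - n) * ‖z - y‖ ^ ((1:ℝ) - n))
        ≤ ∫⁻ z in (ball x (‖x - y‖/2) ∪ (ball y (‖x - y‖/2) ∪
            ((closedBall x D \ ball x (‖x - y‖/2)) \ ball y (‖x - y‖/2)))),
            ENNReal.ofReal (‖x - z‖ ^ ((2:ℝ) - n) * ‖z - y‖ ^ ((1:ℝ) - n)) :=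
          lintegral_mono_set (hcover x y)
      _ ≤ _ := le_trans (lintegral_union_le _ _ _) (by gcongr; exact lintegral_union_le _ _ _)
  by_cases hn3 : n = 3
  · subst hn3
    obtain ⟨K3, hK3, hT3⟩ := T3_n3 hD
    have hlog2 : (0:ℝ) < Real.log 2 := Real.log_pos (by norm_num)
    refine ⟨(K1 + K2)/Real.log 2 + K3, by positivity, ?_⟩
    intro x y hr hr2
    simp only [if_pos rfl]
    set r := ‖x - y‖ with hrdef
    set L : ℝ := Real.log (1/r) with hLdef
    have hLlog2 : Real.log 2 ≤ L := by
      refine Real.log_le_log (by norm_num) ?_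
      rw [le_one_div (by norm_num) hr]
      exact hr2
    have hL0 : 0 < L := lt_of_lt_of_le hlog2 hLlog2
    have hzero : ((3:ℝ) - ((3:ℕ):ℝ)) = 0 := by norm_num
    have hone : (r/2) ^ ((3:ℝ) - ((3:ℕ):ℝ)) = 1 := by rw [hzero, Real.rpow_zero]
    refine (hsplit x y).trans ?_
    calc (∫⁻ z in ball x (r/2), ENNReal.ofReal (‖x - z‖ ^ ((2:ℝ) - (3:ℕ)) * ‖z - y‖ ^ ((1:ℝ) - (3:ℕ))))
        + ((∫⁻ z in ball y (r/2), ENNReal.ofReal (‖x - z‖ ^ ((2:ℝ) - (3:ℕ)) * ‖z - y‖ ^ ((1:ℝ) - (3:ℕ))))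
          + ∫⁻ z in (closedBall x D \ ball x (r/2)) \ ball y (r/2),
              ENNReal.ofReal (‖x - z‖ ^ ((2:ℝ) - (3:ℕ)) * ‖z - y‖ ^ ((1:ℝ) - (3:ℕ))))
        ≤ ENNReal.ofReal (K1 * (r/2) ^ ((3:ℝ) - ((3:ℕ):ℝ)))
          + (ENNReal.ofReal (K2 * (r/2) ^ ((3:ℝ) - ((3:ℕ):ℝ))) + ENNReal.ofReal (K3 * L)) := by
          gcongr
          · exact hT1 x y hr
          · exact hT2 x y hr
          · exact hT3 x y hr hr2
      _ = ENNReal.ofReal (K1 * 1 + (K2 * 1 + K3 * L)) := by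
          rw [hone, ENNReal.ofReal_add (by positivity) (by positivity),
            ENNReal.ofReal_add (by positivity) (by positivity)]
      _ ≤ ENNReal.ofReal (((K1 + K2)/Real.log 2 + K3) * L) := by
          refine ENNReal.ofReal_le_ofReal ?_
          rw [div_add' _ _ _ hlog2.ne', div_mul_eq_mul_div, le_div_iff₀ hlog2]
          nlinarith
  · have hn4 : 4 ≤ n := by omega
    have hn' : (4:ℝ) ≤ (n:ℝ) := by exact_mod_cast hn4
    obtain ⟨K3, hK3, hT3⟩ := T3_ge4 hn4 hD
    refine ⟨(K1 + K2) * (2:ℝ) ^ ((n:ℝ) - 3) + K3, by positivity, ?_⟩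
    intro x y hr hr2
    simp only [if_neg hn3]
    set r := ‖x - y‖ with hrdef
    have hhalf : (r/2) ^ ((3:ℝ) - n) = r ^ ((3:ℝ) - n) * (2:ℝ) ^ ((n:ℝ) - 3) := by
      rw [Real.div_rpow hr.le (by norm_num), div_eq_mul_inv,
        ← Real.rpow_neg (by norm_num : (0:ℝ) ≤ 2)]
      congr 1
      ring
    have hrpow : (0:ℝ) ≤ r ^ ((3:ℝ) - n) := Real.rpow_nonneg hr.le _
    have h2pow : (0:ℝ) ≤ (2:ℝ) ^ ((n:ℝ) - 3) := Real.rpow_nonneg (by norm_num) _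
    refine (hsplit x y).trans ?_
    calc (∫⁻ z in ball x (r/2), ENNReal.ofReal (‖x - z‖ ^ ((2:ℝ) - n) * ‖z - y‖ ^ ((1:ℝ) - n)))
        + ((∫⁻ z in ball y (r/2), ENNReal.ofReal (‖x - z‖ ^ ((2:ℝ) - n) * ‖z - y‖ ^ ((1:ℝ) - n)))
          + ∫⁻ z in (closedBall x D \ ball x (r/2)) \ ball y (r/2),
              ENNReal.ofReal (‖x - z‖ ^ ((2:ℝ) - n) * ‖z - y‖ ^ ((1:ℝ) - n)))
        ≤ ENNReal.ofReal (K1 * (r/2) ^ ((3:ℝ) - n))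
          + (ENNReal.ofReal (K2 * (r/2) ^ ((3:ℝ) - n))
            + ENNReal.ofReal (K3 * r ^ ((3:ℝ) - n))) := by
          gcongr
          · exact hT1 x y hr
          · exact hT2 x y hr
          · exact hT3 x y hr hr2
      _ = ENNReal.ofReal (K1 * (r/2) ^ ((3:ℝ) - n) + (K2 * (r/2) ^ ((3:ℝ) - n)
            + K3 * r ^ ((3:ℝ) - n))) := by
          rw [ENNReal.ofReal_add (by positivity) (by positivity),
            ENNReal.ofReal_add (by positivity) (by positivity)]
      _ ≤ ENNReal.ofReal (((K1 + K2) * (2:ℝ) ^ ((n:ℝ) - 3) + K3) * r ^ ((3:ℝ) - n)) := by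
          refine ENNReal.ofReal_le_ofReal ?_
          rw [hhalf]
          nlinarith

lemma coord_le {n : ℕ} (v : EuclideanSpace ℂ (Fin n)) (j : Fin n) : ‖v j‖ ≤ ‖v‖ := by
  rw [EuclideanSpace.norm_eq]
  have h1 : ‖v j‖ = Real.sqrt (‖v j‖^2) := (Real.sqrt_sq (norm_nonneg _)).symm
  rw [h1]
  apply Real.sqrt_le_sqrt
  exact Finset.single_le_sum (f := fun i => ‖v i‖^2) (fun i _ => sq_nonneg _)
    (Finset.mem_univ j)

lemma G0_abs_le {n : ℕ} (hn : 3 ≤ n) (x z : EuclideanSpace ℝ (Fin n)) :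
    |fundamentalSolutionLaplace n x z| ≤
      (1 / (((n:ℝ) - 2) * (2 * Real.pi ^ ((n:ℝ)/2) / Real.Gamma ((n:ℝ)/2)))) *
        ‖x - z‖ ^ ((2:ℝ) - n) := by
  have hn' : (3:ℝ) ≤ (n:ℝ) := by exact_mod_cast hn
  have hΓ : 0 < Real.Gamma ((n:ℝ)/2) := Real.Gamma_pos_of_pos (by linarith)
  have hΥ : 0 < 2 * Real.pi ^ ((n:ℝ)/2) / Real.Gamma ((n:ℝ)/2) := by
    have := Real.pi_pos
    positivity
  have hc : 0 < ((n:ℝ) - 2) * (2 * Real.pi ^ ((n:ℝ)/2) / Real.Gamma ((n:ℝ)/2)) := by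
    have h2 : (0:ℝ) < (n:ℝ) - 2 := by linarith
    positivity
  rcases eq_or_ne (‖x - z‖) 0 with h0 | h0
  · rw [fundamentalSolutionLaplace, h0, Real.zero_rpow (by linarith),
      Real.zero_rpow (by linarith)]
    simp
  · have hpos : 0 < ‖x - z‖ := lt_of_le_of_ne (norm_nonneg _) (Ne.symm h0)
    have hp : 0 < ‖x - z‖ ^ ((n:ℝ) - 2) := Real.rpow_pos_of_pos hpos _
    rw [fundamentalSolutionLaplace]
    rw [abs_div, abs_one, abs_of_pos (by positivity)]
    rw [show ((2:ℝ) - n) = -((n:ℝ) - 2) by ring, Real.rpow_neg hpos.le]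
    rw [div_eq_mul_inv, one_mul, mul_inv, one_div]

lemma Fz_bound {n : ℕ} (hn : 3 ≤ n)
    (A : EuclideanSpace ℝ (Fin n) → EuclideanSpace ℂ (Fin n))
    (qt : EuclideanSpace ℝ (Fin n) → ℂ)
    {M' C₀ D : ℝ} (hM'0 : 0 ≤ M') (hC₀ : 0 < C₀)
    (G : EuclideanSpace ℝ (Fin n) → EuclideanSpace ℝ (Fin n) → ℂ)
    (H : EuclideanSpace ℝ (Fin n) → EuclideanSpace ℝ (Fin n) → EuclideanSpace ℂ (Fin n))
    (x y z : EuclideanSpace ℝ (Fin n))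
    (hA : ‖A z‖ ≤ M') (hq : ‖qt z‖ ≤ M')
    (hGz : ‖G z y‖ ≤ C₀ * ‖z - y‖ ^ ((2:ℝ) - n))
    (hHz : ‖H z y‖ ≤ C₀ * ‖z - y‖ ^ ((1:ℝ) - n))
    (hzy : z ≠ y) (hDzy : ‖z - y‖ ≤ D) :
    ‖(fundamentalSolutionLaplace n x z : ℂ) *
        (2 * Complex.I * (∑ j : Fin n, A z j * H z y j) - qt z * G z y)‖
      ≤ (1 / (((n:ℝ) - 2) * (2 * Real.pi ^ ((n:ℝ)/2) / Real.Gamma ((n:ℝ)/2)))) *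
          (2*(n:ℝ)*M'*C₀ + M'*C₀*D) *
          (‖x - z‖ ^ ((2:ℝ) - n) * ‖z - y‖ ^ ((1:ℝ) - n)) := by
  have hn' : (3:ℝ) ≤ (n:ℝ) := by exact_mod_cast hn
  have hΓ : 0 < Real.Gamma ((n:ℝ)/2) := Real.Gamma_pos_of_pos (by linarith)
  have hcg0 : 0 ≤ (1 / (((n:ℝ) - 2) * (2 * Real.pi ^ ((n:ℝ)/2) / Real.Gamma ((n:ℝ)/2)))) := by
    have := Real.pi_pos
    have h2 : (0:ℝ) < (n:ℝ) - 2 := by linarith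
    positivity
  set cg : ℝ := (1 / (((n:ℝ) - 2) * (2 * Real.pi ^ ((n:ℝ)/2) / Real.Gamma ((n:ℝ)/2)))) with hcg
  set u1 : ℝ := ‖x - z‖ ^ ((2:ℝ) - n) with hu1def
  set u2 : ℝ := ‖z - y‖ ^ ((1:ℝ) - n) with hu2def
  have hu1 : 0 ≤ u1 := Real.rpow_nonneg (norm_nonneg _) _
  have hu2 : 0 ≤ u2 := Real.rpow_nonneg (norm_nonneg _) _
  have hzy' : 0 < ‖z - y‖ := by
    rw [norm_sub_pos_iff]
    exact hzy
  have hsum : ‖∑ j : Fin n, A z j * H z y j‖ ≤ (n:ℝ) * (M' * (C₀ * u2)) := by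
    refine le_trans (norm_sum_le _ _) ?_
    have each : ∀ j : Fin n, ‖A z j * H z y j‖ ≤ M' * (C₀ * u2) := by
      intro j
      rw [norm_mul]
      have h1 : ‖A z j‖ ≤ M' := le_trans (coord_le _ j) hA
      have h2 : ‖H z y j‖ ≤ C₀ * u2 := le_trans (coord_le _ j) hHz
      exact mul_le_mul h1 h2 (norm_nonneg _) hM'0
    refine le_trans (Finset.sum_le_sum (fun j _ => each j)) ?_
    rw [Finset.sum_const, Finset.card_univ, Fintype.card_fin, nsmul_eq_mul]
  have hfac : ‖2 * Complex.I * (∑ j : Fin n, A z j * H z y j) - qt z * G z y‖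
      ≤ 2*((n:ℝ)*(M'*(C₀*u2))) + M'*(C₀*(D*u2)) := by
    refine le_trans (norm_sub_le _ _) ?_
    have h2I : ‖(2 : ℂ) * Complex.I‖ = 2 := by simp
    have hS : ‖2 * Complex.I * (∑ j : Fin n, A z j * H z y j)‖
        ≤ 2*((n:ℝ)*(M'*(C₀*u2))) := by
      rw [norm_mul, h2I]
      exact mul_le_mul_of_nonneg_left hsum (by norm_num)
    have hqG : ‖qt z * G z y‖ ≤ M' * (C₀ * (D * u2)) := by
      rw [norm_mul]
      have h22 : ‖G z y‖ ≤ C₀ * (D * u2) := by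
        refine hGz.trans ?_
        have he : ‖z - y‖ ^ ((2:ℝ) - n) = ‖z - y‖ * u2 := by
          rw [hu2def, show ((2:ℝ) - n) = 1 + ((1:ℝ) - n) by ring,
            Real.rpow_add hzy', Real.rpow_one]
        rw [he]
        have := mul_le_mul_of_nonneg_right hDzy hu2
        nlinarith
      exact mul_le_mul hq h22 (norm_nonneg _) hM'0
    linarith
  calc ‖(fundamentalSolutionLaplace n x z : ℂ) *
        (2 * Complex.I * (∑ j : Fin n, A z j * H z y j) - qt z * G z y)‖
      = |fundamentalSolutionLaplace n x z| *
        ‖2 * Complex.I * (∑ j : Fin n, A z j * H z y j) - qt z * G z y‖ := by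
        rw [norm_mul, Complex.norm_real, Real.norm_eq_abs]
    _ ≤ (cg * u1) * (2*((n:ℝ)*(M'*(C₀*u2))) + M'*(C₀*(D*u2))) := by
        refine mul_le_mul (G0_abs_le hn x z) hfac (norm_nonneg _) (mul_nonneg hcg0 hu1)
    _ = cg * (2*(n:ℝ)*M'*C₀ + M'*C₀*D) * (u1 * u2) := by ring

/-- **Asymptotics of the fundamental solution of the magnetic Schrödinger
operator.** If `G`, with gradient-type companion `H`, satisfies the pointwise
bounds `|G(z,y)| ≤ C₀‖z−y‖^{2−n}`, `‖H(z,y)‖ ≤ C₀‖z−y‖^{1−n}` and the integral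
equation `G(x,y) = G₀(x,y) + ∫_Ω G₀(x,z)(2i A(z)·H(z,y) − q̃(z) G(z,y)) dz`
on a bounded open set `Ω` with bounded measurable coefficients `A`, `q̃`, then
`G(x,y) − G₀(x,y) = O(log(1/‖x−y‖))` for `n = 3` and `O(‖x−y‖^{3−n})` for
`n ≥ 4`, as `‖x−y‖ → 0`. -/
theorem stmt_8 (n : ℕ) (hn : 3 ≤ n)
    (Ω : Set (EuclideanSpace ℝ (Fin n)))
    (hΩo : IsOpen Ω) (hΩb : Bornology.IsBounded Ω)
    (A : EuclideanSpace ℝ (Fin n) → EuclideanSpace ℂ (Fin n))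
    (qt : EuclideanSpace ℝ (Fin n) → ℂ)
    (hAm : ∀ j : Fin n, Measurable (fun z => A z j)) (hqm : Measurable qt)
    (M : ℝ) (hAb : ∀ z ∈ Ω, ‖A z‖ ≤ M) (hqb : ∀ z ∈ Ω, ‖qt z‖ ≤ M)
    (C₀ : ℝ) (hC₀ : 0 < C₀)
    (G : EuclideanSpace ℝ (Fin n) → EuclideanSpace ℝ (Fin n) → ℂ)
    (H : EuclideanSpace ℝ (Fin n) → EuclideanSpace ℝ (Fin n) → EuclideanSpace ℂ (Fin n))
    (hGm : Measurable (Function.uncurry G))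
    (hHm : ∀ j : Fin n, Measurable (fun p :
      EuclideanSpace ℝ (Fin n) × EuclideanSpace ℝ (Fin n) => H p.1 p.2 j))
    (hGb : ∀ z ∈ Ω, ∀ y ∈ Ω, z ≠ y →
      ‖G z y‖ ≤ C₀ * ‖z - y‖ ^ ((2 : ℝ) - n))
    (hHb : ∀ z ∈ Ω, ∀ y ∈ Ω, z ≠ y →
      ‖H z y‖ ≤ C₀ * ‖z - y‖ ^ ((1 : ℝ) - n))
    (heq : ∀ x ∈ Ω, ∀ y ∈ Ω, x ≠ y →
      G x y = (fundamentalSolutionLaplace n x y : ℂ)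
        + ∫ z in Ω, (fundamentalSolutionLaplace n x z : ℂ) *
            (2 * Complex.I * (∑ j : Fin n, A z j * H z y j) - qt z * G z y)) :
    ∃ C > (0 : ℝ), ∀ x ∈ Ω, ∀ y ∈ Ω, 0 < ‖x - y‖ → ‖x - y‖ ≤ 1 / 2 →
      ((n = 3 →
        ‖G x y - (fundamentalSolutionLaplace n x y : ℂ)‖
          ≤ C * Real.log (1 / ‖x - y‖)) ∧
       (4 ≤ n →
        ‖G x y - (fundamentalSolutionLaplace n x y : ℂ)‖
          ≤ C * ‖x - y‖ ^ ((3 : ℝ) - n))) := by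
    classical
  have hn' : (3:ℝ) ≤ (n:ℝ) := by exact_mod_cast hn
  set M' : ℝ := max M 0 with hM'
  have hM'0 : 0 ≤ M' := le_max_right _ _
  set D : ℝ := Metric.diam Ω + 1 with hDdef
  have hD1 : 1 ≤ D := by
    have := Metric.diam_nonneg (s := Ω)
    linarith
  have hΩsub : ∀ x ∈ Ω, Ω ⊆ ball x D := by
    intro x hx z hz
    have := Metric.dist_le_diam_of_mem hΩb hz hx
    rw [mem_ball]
    linarith
  have hΓ : 0 < Real.Gamma ((n:ℝ)/2) := Real.Gamma_pos_of_pos (by linarith)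
  have hcg0 : 0 ≤ (1 / (((n:ℝ) - 2) * (2 * Real.pi ^ ((n:ℝ)/2) / Real.Gamma ((n:ℝ)/2)))) := by
    have := Real.pi_pos
    have h2 : (0:ℝ) < (n:ℝ) - 2 := by linarith
    positivity
  set cg : ℝ := (1 / (((n:ℝ) - 2) * (2 * Real.pi ^ ((n:ℝ)/2) / Real.Gamma ((n:ℝ)/2)))) with hcg
  set CC : ℝ := cg * (2*(n:ℝ)*M'*C₀ + M'*C₀*D) with hCC
  have hCC0 : 0 ≤ CC := by
    refine mul_nonneg hcg0 ?_
    have hD0 : (0:ℝ) ≤ D := by linarith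
    positivity
  obtain ⟨K, hK0, hKbound⟩ := key_conv (n := n) hn hD1
  have hCK0 : 0 ≤ CC * K := mul_nonneg hCC0 hK0.le
  refine ⟨CC * K + 1, by linarith, ?_⟩
  intro x hx y hy hr hr2
  have hne : x ≠ y := by
    intro h
    rw [h, sub_self, norm_zero] at hr
    exact lt_irrefl _ hr
  set r : ℝ := ‖x - y‖ with hrdef
  set Φ : ℝ := (if n = 3 then Real.log (1/r) else r ^ ((3:ℝ) - n)) with hΦdef
  have hΦ0 : 0 ≤ Φ := by
    rw [hΦdef]
    split
    · refine Real.log_nonneg ?_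
      rw [le_one_div (by norm_num) hr]
      linarith
    · exact Real.rpow_nonneg hr.le _
  have hmain : ‖G x y - (fundamentalSolutionLaplace n x y : ℂ)‖ ≤ (CC * K) * Φ := by
    have heq' : G x y - (fundamentalSolutionLaplace n x y : ℂ)
        = ∫ z in Ω, (fundamentalSolutionLaplace n x z : ℂ) *
            (2 * Complex.I * (∑ j : Fin n, A z j * H z y j) - qt z * G z y) := by
      rw [heq x hx y hy hne]
      ring
    rw [heq']
    refine le_trans (norm_integral_le_lintegral_norm _) ?_
    refine ENNReal.toReal_le_of_le_ofReal (by positivity) ?_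
    have haemem : ∀ᵐ z ∂(volume.restrict Ω), z ∈ Ω := ae_restrict_mem hΩo.measurableSet
    have hsingleton : ∀ w : EuclideanSpace ℝ (Fin n),
        (volume.restrict Ω) {w} = 0 := by
      intro w
      haveI : Nontrivial (EuclideanSpace ℝ (Fin n)) := by
        refine ⟨⟨0, EuclideanSpace.single ⟨0, by omega⟩ (1:ℝ), fun h => ?_⟩⟩
        have := congrArg (fun v : EuclideanSpace ℝ (Fin n) => v ⟨0, by omega⟩) h
        simp [EuclideanSpace.single_apply] at this
      refine le_antisymm (le_trans (Measure.restrict_le_self _) ?_) (by simp)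
      rw [measure_singleton]
    have haex : ∀ᵐ z ∂(volume.restrict Ω), z ≠ x := by
      rw [ae_iff]
      refine measure_mono_null (fun z hz => ?_) (hsingleton x)
      simp only [Set.mem_setOf_eq, not_not] at hz
      exact hz
    have haey : ∀ᵐ z ∂(volume.restrict Ω), z ≠ y := by
      rw [ae_iff]
      refine measure_mono_null (fun z hz => ?_) (hsingleton y)
      simp only [Set.mem_setOf_eq, not_not] at hz
      exact hz
    have hptwise : ∀ᵐ z ∂(volume.restrict Ω),
        ENNReal.ofReal ‖(fundamentalSolutionLaplace n x z : ℂ) *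
            (2 * Complex.I * (∑ j : Fin n, A z j * H z y j) - qt z * G z y)‖
          ≤ ENNReal.ofReal CC *
            ENNReal.ofReal (‖x - z‖ ^ ((2:ℝ) - n) * ‖z - y‖ ^ ((1:ℝ) - n)) := by
      filter_upwards [haemem, haey] with z hzΩ hzy
      rw [← ENNReal.ofReal_mul hCC0]
      refine ENNReal.ofReal_le_ofReal ?_
      refine Fz_bound hn A qt hM'0 hC₀ G H x y z ?_ ?_ ?_ ?_ hzy ?_
      · exact le_trans (hAb z hzΩ) (le_max_left _ _)
      · exact le_trans (hqb z hzΩ) (le_max_left _ _)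
      · exact hGb z hzΩ y hy hzy
      · exact hHb z hzΩ y hy hzy
      · have h1 : dist z y ≤ Metric.diam Ω := Metric.dist_le_diam_of_mem hΩb hzΩ hy
        rw [dist_eq_norm] at h1
        linarith
    calc ∫⁻ z in Ω, ENNReal.ofReal ‖(fundamentalSolutionLaplace n x z : ℂ) *
            (2 * Complex.I * (∑ j : Fin n, A z j * H z y j) - qt z * G z y)‖
        ≤ ∫⁻ z in Ω, ENNReal.ofReal CC *
            ENNReal.ofReal (‖x - z‖ ^ ((2:ℝ) - n) * ‖z - y‖ ^ ((1:ℝ) - n)) :=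
          lintegral_mono_ae hptwise
      _ = ENNReal.ofReal CC *
            ∫⁻ z in Ω, ENNReal.ofReal (‖x - z‖ ^ ((2:ℝ) - n) * ‖z - y‖ ^ ((1:ℝ) - n)) :=
          lintegral_const_mul' _ _ ENNReal.ofReal_ne_top
      _ ≤ ENNReal.ofReal CC * ENNReal.ofReal (K * Φ) := by
          gcongr
          refine le_trans (lintegral_mono_set (hΩsub x hx)) ?_
          exact hKbound x y hr hr2
      _ ≤ ENNReal.ofReal (CC * K * Φ) := by
          rw [← ENNReal.ofReal_mul hCC0]
          refine ENNReal.ofReal_le_ofReal (le_of_eq ?_)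
          ring
  constructor
  · intro h3
    have hΦeq : Φ = Real.log (1/r) := by rw [hΦdef, if_pos h3]
    rw [hΦeq] at hmain
    have hlog0 : 0 ≤ Real.log (1/r) := by rw [← hΦeq]; exact hΦ0
    nlinarith
  · intro h4
    have hΦeq : Φ = r ^ ((3:ℝ) - n) := by rw [hΦdef, if_neg (by omega)]
    rw [hΦeq] at hmain
    have hp0 : 0 ≤ r ^ ((3:ℝ) - n) := Real.rpow_nonneg hr.le _
    nlinarith
end

section
/- Let n ≥ 3, k > 0 and r₁ > 0. There exist constants C > 0 and δ₁ ∈ (0,1) such that for every δ ∈ (0, δ₁), every measurable set U ⊆ ℝ^{n−1} containing { x' ∈ ℝ^{n−1} : ‖x'‖ ≤ r₁ }, and every measurable function φ : ℝ^{n−1} → ℝ satisfying |φ(x')| ≤ ‖x'‖/2 for all x' ∈ U, the following lower bounds hold: ∫_U ( ‖x'‖² + (φ(x') + δ)² )^{−k/2} dx' ≥ 1/C if k < n−1; ≥ (1/C)·log(1/δ) if k = n−1; and ≥ (1/C)·δ^{n−1−k} if k > n−1. -/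
open MeasureTheory

set_option maxHeartbeats 1000000

open Metric Set


lemma annulus_log_s13 (d : ℕ) (hd : 2 ≤ d) (a b : ℝ) (ha : 0 < a) (hab : a ≤ b) :
    ∫ x : EuclideanSpace ℝ (Fin d) in {x | ‖x‖ ∈ Icc a b}, ‖x‖ ^ (-(d : ℝ)) =
      (d : ℝ) * (volume (ball (0 : EuclideanSpace ℝ (Fin d)) 1)).toReal * Real.log (b / a) := by
  set E := EuclideanSpace ℝ (Fin d)
  haveI : Nonempty (Fin d) := ⟨⟨0, by omega⟩⟩
  haveI : Nontrivial E := by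
    have : 0 < Module.finrank ℝ E := by
      rw [finrank_euclideanSpace_fin]; omega
    exact Module.nontrivial_of_finrank_pos this
  have hdim : Module.finrank ℝ E = d := finrank_euclideanSpace_fin
  set f : ℝ → ℝ := (Icc a b).indicator (fun y => y ^ (-(d : ℝ))) with hf
  have hA : MeasurableSet {x : E | ‖x‖ ∈ Icc a b} :=
    measurable_norm measurableSet_Icc
  have h1 : ∫ x : E in {x | ‖x‖ ∈ Icc a b}, ‖x‖ ^ (-(d : ℝ)) = ∫ x : E, f ‖x‖ := by
    rw [← integral_indicator hA]
    congr 1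
  rw [h1, integral_fun_norm_addHaar volume f, hdim]
  have h2 : ∫ y in Ioi (0:ℝ), y ^ (d - 1) • f y = Real.log (b / a) := by
    have : (fun y : ℝ => y ^ (d - 1) • f y)
        = (Icc a b).indicator (fun y => y ^ (d - 1) * y ^ (-(d : ℝ))) := by
      ext y
      by_cases hy : y ∈ Icc a b <;> simp [hf, indicator, hy]
    rw [this, setIntegral_indicator measurableSet_Icc]
    have hint : Set.Ioi (0:ℝ) ∩ Icc a b = Icc a b :=
      Set.inter_eq_self_of_subset_right (fun y hy => lt_of_lt_of_le ha hy.1)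
    rw [hint, setIntegral_congr_fun measurableSet_Icc (g := fun y : ℝ => y⁻¹) ?_,
      integral_Icc_eq_integral_Ioc, ← intervalIntegral.integral_of_le hab,
      integral_inv_of_pos ha (lt_of_lt_of_le ha hab)]
    intro y hy
    have hy0 : 0 < y := lt_of_lt_of_le ha hy.1
    show y ^ (d - 1) * y ^ (-(d:ℝ)) = y⁻¹
    rw [← Real.rpow_natCast y (d-1), ← Real.rpow_add hy0]
    have : ((d - 1 : ℕ) : ℝ) + (-(d : ℝ)) = -1 := by
      have : ((d - 1 : ℕ) : ℝ) = (d : ℝ) - 1 := by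
        rw [Nat.cast_sub (by omega)]; simp
      rw [this]; ring
    rw [this, Real.rpow_neg_one]
  rw [h2, nsmul_eq_mul, smul_eq_mul]
  simp only [Measure.real]
  ring

lemma lb_aux {α : Type*} [MeasurableSpace α] {μ : Measure α} {F : α → ENNReal}
    {A U : Set α} (hA : MeasurableSet A) (hAU : A ⊆ U) {c : ENNReal}
    (h : ∀ x ∈ A, c ≤ F x) : c * μ A ≤ ∫⁻ x in U, F x ∂μ :=
  calc c * μ A = ∫⁻ _ in A, c ∂μ := (setLIntegral_const A c).symm
    _ ≤ ∫⁻ x in A, F x ∂μ := lintegral_mono_ae ((ae_restrict_mem hA).mono h)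
    _ ≤ ∫⁻ x in U, F x ∂μ := lintegral_mono_set hAU

/-- Lower surface estimates in graph coordinates: for `n ≥ 3`, `k > 0`,
`r₁ > 0`, there are `C > 0` and `δ₁ ∈ (0,1)` such that for all `δ ∈ (0,δ₁)`,
all measurable `U ⊆ ℝ^{n−1}` containing `{‖x'‖ ≤ r₁}` and all measurable
`φ : ℝ^{n−1} → ℝ` with `|φ(x')| ≤ ‖x'‖/2` on `U`:
`∫_U (‖x'‖² + (φ(x')+δ)²)^{−k/2} dx'` is bounded below by `1/C` if `k < n−1`,
by `(1/C) log(1/δ)` if `k = n−1`, and by `(1/C) δ^{n−1−k}` if `k > n−1`. -/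
theorem stmt_13 (n : ℕ) (hn : 3 ≤ n) (k : ℝ) (hk : 0 < k) (r₁ : ℝ) (hr₁ : 0 < r₁) :
    ∃ C > (0 : ℝ), ∃ δ₁ ∈ Set.Ioo (0 : ℝ) 1, ∀ δ ∈ Set.Ioo (0 : ℝ) δ₁,
      ∀ U : Set (EuclideanSpace ℝ (Fin (n - 1))), MeasurableSet U →
        Metric.closedBall 0 r₁ ⊆ U →
        ∀ φ : EuclideanSpace ℝ (Fin (n - 1)) → ℝ, Measurable φ →
          (∀ x' ∈ U, |φ x'| ≤ ‖x'‖ / 2) →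
          ((k < (n : ℝ) - 1 →
              ENNReal.ofReal (1 / C)
                ≤ ∫⁻ x' in U,
                    ENNReal.ofReal ((‖x'‖ ^ 2 + (φ x' + δ) ^ 2) ^ (-k / 2))) ∧
           (k = (n : ℝ) - 1 →
              ENNReal.ofReal ((1 / C) * Real.log (1 / δ))
                ≤ ∫⁻ x' in U,
                    ENNReal.ofReal ((‖x'‖ ^ 2 + (φ x' + δ) ^ 2) ^ (-k / 2))) ∧
           ((n : ℝ) - 1 < k →
              ENNReal.ofReal ((1 / C) * δ ^ ((n : ℝ) - 1 - k))
                ≤ ∫⁻ x' in U,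
                    ENNReal.ofReal ((‖x'‖ ^ 2 + (φ x' + δ) ^ 2) ^ (-k / 2)))) := by

  haveI : Nonempty (Fin (n - 1)) := ⟨⟨0, by omega⟩⟩
  haveI hNT : Nontrivial (EuclideanSpace ℝ (Fin (n - 1))) := by
    have : 0 < Module.finrank ℝ (EuclideanSpace ℝ (Fin (n - 1))) := by
      rw [finrank_euclideanSpace_fin]; omega
    exact Module.nontrivial_of_finrank_pos this
  have hdim : Module.finrank ℝ (EuclideanSpace ℝ (Fin (n - 1))) = n - 1 :=
    finrank_euclideanSpace_fin
  have hdcast : ((n - 1 : ℕ) : ℝ) = (n : ℝ) - 1 := by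
    rw [Nat.cast_sub (by omega)]; simp
  set B := (volume (ball (0 : EuclideanSpace ℝ (Fin (n - 1))) 1)).toReal with hBdef
  have hBfin : volume (ball (0 : EuclideanSpace ℝ (Fin (n - 1))) 1) ≠ ⊤ :=
    measure_ball_lt_top.ne
  have hB : 0 < B :=
    ENNReal.toReal_pos (measure_ball_pos volume _ one_pos).ne' hBfin
  have hBor : ENNReal.ofReal B = volume (ball (0 : EuclideanSpace ℝ (Fin (n - 1))) 1) :=
    ENNReal.ofReal_toReal hBfin
  set M₁ : ℝ := r₁ ^ 2 + (r₁ / 2 + 1) ^ 2 with hM₁def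
  have hM₁ : 0 < M₁ := by positivity
  set c2 : ℝ := (13 / 4 : ℝ) ^ (-k / 2) with hc2def
  have hc2 : 0 < c2 := Real.rpow_pos_of_pos (by norm_num) _
  set v₁ : ℝ := M₁ ^ (-k / 2) * (r₁ ^ (n - 1) * B) with hv₁def
  set v₂ : ℝ := c2 * (((n - 1 : ℕ) : ℝ) * B) / 2 with hv₂def
  set v₃ : ℝ := c2 * B with hv₃def
  have hv₁ : 0 < v₁ := by
    have := Real.rpow_pos_of_pos hM₁ (-k / 2); positivity
  have hv₂ : 0 < v₂ := by
    have hnn : (0:ℝ) < ((n - 1 : ℕ) : ℝ) := by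
      have : 2 ≤ n - 1 := by omega
      exact_mod_cast lt_of_lt_of_le (by norm_num : (0:ℕ) < 2) this
    positivity
  have hv₃ : 0 < v₃ := by positivity
  refine ⟨max 1 (max (1 / v₁) (max (1 / v₂) (1 / v₃))),
    lt_of_lt_of_le one_pos (le_max_left _ _),
    min (1 / 2) (min r₁ (r₁ ^ 2)), ⟨by positivity,
      lt_of_le_of_lt (min_le_left _ _) (by norm_num)⟩, ?_⟩
  set C : ℝ := max 1 (max (1 / v₁) (max (1 / v₂) (1 / v₃))) with hCdef
  have hC : 0 < C := lt_of_lt_of_le one_pos (le_max_left _ _)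
  have hCv₁ : 1 / C ≤ v₁ := by
    rw [← one_div_one_div v₁]
    exact one_div_le_one_div_of_le (by positivity) (le_trans (le_max_left _ _) (le_max_right _ _))
  have hCv₂ : 1 / C ≤ v₂ := by
    rw [← one_div_one_div v₂]
    exact one_div_le_one_div_of_le (by positivity)
      (le_trans (le_trans (le_max_left _ _) (le_max_right _ _)) (le_max_right _ _))
  have hCv₃ : 1 / C ≤ v₃ := by
    rw [← one_div_one_div v₃]
    exact one_div_le_one_div_of_le (by positivity)
      (le_trans (le_trans (le_max_right _ _) (le_max_right _ _)) (le_max_right _ _))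
  intro δ hδ U hU hUball φ hφ hφb
  have hδ0 : 0 < δ := hδ.1
  have hδhalf : δ < 1 / 2 := lt_of_lt_of_le hδ.2 (min_le_left _ _)
  have hδr : δ < r₁ := lt_of_lt_of_le hδ.2 (le_trans (min_le_right _ _) (min_le_left _ _))
  have hδr2 : δ < r₁ ^ 2 := lt_of_lt_of_le hδ.2 (le_trans (min_le_right _ _) (min_le_right _ _))
  have hδ1 : δ < 1 := by linarith
  -- positivity of the base on U
  have hs_pos : ∀ x ∈ U, (0:ℝ) < ‖x‖ ^ 2 + (φ x + δ) ^ 2 := by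
    intro x hx
    rcases eq_or_ne x 0 with rfl | hx0
    · have h0 : |φ (0 : EuclideanSpace ℝ (Fin (n - 1)))| ≤ 0 := by
        simpa using hφb 0 hx
      have : φ (0 : EuclideanSpace ℝ (Fin (n - 1))) = 0 := by
        have := abs_nonneg (φ (0 : EuclideanSpace ℝ (Fin (n - 1))))
        have := abs_eq_zero.mp (le_antisymm h0 this)
        exact this
      rw [this]
      simp only [norm_zero, zero_add]
      positivity
    · have : 0 < ‖x‖ := norm_pos_iff.mpr hx0
      positivity
  have hmono : ∀ {s t : ℝ}, 0 < s → s ≤ t → t ^ (-k / 2) ≤ s ^ (-k / 2) := by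
    intro s t hs hst
    exact Real.rpow_le_rpow_of_nonpos hs hst (by linarith [hk] : -k / 2 ≤ 0)
  have hsplit : ∀ t : ℝ, 0 ≤ t → ((13 / 4 : ℝ) * t ^ 2) ^ (-k / 2) = c2 * t ^ (-k) := by
    intro t ht
    rw [Real.mul_rpow (by norm_num) (by positivity), ← Real.rpow_natCast t 2,
      ← Real.rpow_mul ht]
    have h2 : ((2:ℕ):ℝ) * (-k / 2) = -k := by push_cast; ring
    rw [h2]
  refine ⟨?_, ?_, ?_⟩
  · -- case k < n - 1
    intro hklt
    have hpt : ∀ x ∈ closedBall (0 : EuclideanSpace ℝ (Fin (n - 1))) r₁,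
        ENNReal.ofReal (M₁ ^ (-k / 2))
          ≤ ENNReal.ofReal ((‖x‖ ^ 2 + (φ x + δ) ^ 2) ^ (-k / 2)) := by
      intro x hx
      have hxU : x ∈ U := hUball hx
      have hxr : ‖x‖ ≤ r₁ := mem_closedBall_zero_iff.mp hx
      have hb := abs_le.mp (hφb x hxU)
      have hsle : ‖x‖ ^ 2 + (φ x + δ) ^ 2 ≤ M₁ := by
        rw [hM₁def]
        nlinarith [norm_nonneg x, hb.1, hb.2]
      exact ENNReal.ofReal_le_ofReal (hmono (hs_pos x hxU) hsle)
    calc ENNReal.ofReal (1 / C) ≤ ENNReal.ofReal v₁ := ENNReal.ofReal_le_ofReal hCv₁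
      _ = ENNReal.ofReal (M₁ ^ (-k / 2))
            * volume (closedBall (0 : EuclideanSpace ℝ (Fin (n - 1))) r₁) := by
          rw [Measure.addHaar_closedBall volume 0 hr₁.le, hdim, ← hBor, hv₁def,
            ENNReal.ofReal_mul (Real.rpow_nonneg hM₁.le _),
            ENNReal.ofReal_mul (by positivity)]
      _ ≤ _ := lb_aux measurableSet_closedBall hUball hpt
  · -- case k = n - 1
    intro hkeq
    have hdk : ((n - 1 : ℕ) : ℝ) = k := by rw [hdcast, hkeq]
    set A : Set (EuclideanSpace ℝ (Fin (n - 1))) := {x | ‖x‖ ∈ Icc δ r₁} with hAdef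
    have hA : MeasurableSet A := measurable_norm measurableSet_Icc
    have hAU : A ⊆ U := fun x hx => hUball (mem_closedBall_zero_iff.mpr hx.2)
    have hAeq : A = closedBall (0 : EuclideanSpace ℝ (Fin (n - 1))) r₁ \ ball 0 δ := by
      ext x
      simp [hAdef, mem_closedBall_zero_iff, mem_ball_zero_iff, not_lt, and_comm]
    have hcomp : IsCompact A := by
      rw [hAeq]; exact (isCompact_closedBall _ _).diff isOpen_ball
    have hcont : ContinuousOn
        (fun x : EuclideanSpace ℝ (Fin (n - 1)) => c2 * ‖x‖ ^ (-(((n - 1 : ℕ) : ℝ)))) A := by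
      refine continuousOn_const.mul ?_
      refine ContinuousOn.rpow_const continuous_norm.continuousOn ?_
      intro x hx
      exact Or.inl (ne_of_gt (lt_of_lt_of_le hδ0 hx.1))
    have hint : IntegrableOn
        (fun x : EuclideanSpace ℝ (Fin (n - 1)) => c2 * ‖x‖ ^ (-(((n - 1 : ℕ) : ℝ)))) A :=
      hcont.integrableOn_compact hcomp
    have hpt : ∀ x ∈ A,
        ENNReal.ofReal (c2 * ‖x‖ ^ (-(((n - 1 : ℕ) : ℝ))))
          ≤ ENNReal.ofReal ((‖x‖ ^ 2 + (φ x + δ) ^ 2) ^ (-k / 2)) := by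
      intro x hx
      have hxU : x ∈ U := hAU hx
      have hb := abs_le.mp (hφb x hxU)
      have hsle : ‖x‖ ^ 2 + (φ x + δ) ^ 2 ≤ (13 / 4 : ℝ) * ‖x‖ ^ 2 := by
        nlinarith [hx.1, hb.1, hb.2, hδ0]
      have := hmono (hs_pos x hxU) hsle
      rw [hsplit ‖x‖ (norm_nonneg x)] at this
      rw [hdk]
      exact ENNReal.ofReal_le_ofReal this
    have hlog0 : 0 ≤ Real.log (1 / δ) := Real.log_nonneg ((le_div_iff₀ hδ0).mpr (by linarith))
    have hhalf : (1 / 2) * Real.log (1 / δ) ≤ Real.log (r₁ / δ) := by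
      rw [Real.log_div hr₁.ne' hδ0.ne',
        show Real.log (1 / δ) = -Real.log δ by rw [one_div, Real.log_inv]]
      have : Real.log δ ≤ Real.log (r₁ ^ 2) := Real.log_le_log hδ0 hδr2.le
      rw [Real.log_pow] at this
      push_cast at this
      linarith
    have hreal : (1 / C) * Real.log (1 / δ)
        ≤ c2 * (((n - 1 : ℕ) : ℝ) * B * Real.log (r₁ / δ)) := by
      have h1 : (1 / C) * Real.log (1 / δ) ≤ v₂ * Real.log (1 / δ) :=
        mul_le_mul_of_nonneg_right hCv₂ hlog0
      have h2 : c2 * (((n - 1 : ℕ) : ℝ) * B) * ((1 / 2) * Real.log (1 / δ))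
          ≤ c2 * (((n - 1 : ℕ) : ℝ) * B) * Real.log (r₁ / δ) := by
        apply mul_le_mul_of_nonneg_left hhalf
        have hnn : (0:ℝ) ≤ ((n - 1 : ℕ) : ℝ) := Nat.cast_nonneg _
        positivity
      rw [hv₂def] at h1
      nlinarith [h1, h2]
    calc ENNReal.ofReal ((1 / C) * Real.log (1 / δ))
        ≤ ENNReal.ofReal (c2 * (((n - 1 : ℕ) : ℝ) * B * Real.log (r₁ / δ))) :=
          ENNReal.ofReal_le_ofReal hreal
      _ = ENNReal.ofReal (∫ x in A, c2 * ‖x‖ ^ (-(((n - 1 : ℕ) : ℝ)))) := by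
          rw [integral_const_mul, annulus_log_s13 (n - 1) (by omega) δ r₁ hδ0 hδr.le]
      _ = ∫⁻ x in A, ENNReal.ofReal (c2 * ‖x‖ ^ (-(((n - 1 : ℕ) : ℝ)))) :=
          ofReal_integral_eq_lintegral_ofReal hint
            (Filter.Eventually.of_forall fun x => by positivity)
      _ ≤ ∫⁻ x in A, ENNReal.ofReal ((‖x‖ ^ 2 + (φ x + δ) ^ 2) ^ (-k / 2)) :=
          lintegral_mono_ae ((ae_restrict_mem hA).mono hpt)
      _ ≤ _ := lintegral_mono_set hAU
  · -- case k > n - 1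
    intro hkgt
    have hpt : ∀ x ∈ ball (0 : EuclideanSpace ℝ (Fin (n - 1))) δ,
        ENNReal.ofReal (c2 * δ ^ (-k))
          ≤ ENNReal.ofReal ((‖x‖ ^ 2 + (φ x + δ) ^ 2) ^ (-k / 2)) := by
      intro x hx
      have hxr : ‖x‖ < δ := mem_ball_zero_iff.mp hx
      have hxU : x ∈ U := hUball (mem_closedBall_zero_iff.mpr (by linarith))
      have hb := abs_le.mp (hφb x hxU)
      have hsle : ‖x‖ ^ 2 + (φ x + δ) ^ 2 ≤ (13 / 4 : ℝ) * δ ^ 2 := by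
        nlinarith [norm_nonneg x, hb.1, hb.2]
      have := hmono (hs_pos x hxU) hsle
      rw [hsplit δ hδ0.le] at this
      exact ENNReal.ofReal_le_ofReal this
    have hAU : ball (0 : EuclideanSpace ℝ (Fin (n - 1))) δ ⊆ U := fun x hx =>
      hUball (mem_closedBall_zero_iff.mpr (by
        have := mem_ball_zero_iff.mp hx; linarith))
    have hrpow : δ ^ ((n : ℝ) - 1 - k) = δ ^ (n - 1) * δ ^ (-k) := by
      rw [show (n : ℝ) - 1 - k = ((n - 1 : ℕ) : ℝ) + (-k) by rw [hdcast]; ring,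
        Real.rpow_add hδ0, Real.rpow_natCast]
    have hreal : (1 / C) * δ ^ ((n : ℝ) - 1 - k)
        ≤ c2 * δ ^ (-k) * (δ ^ (n - 1) * B) := by
      rw [hrpow, show c2 * δ ^ (-k) * (δ ^ (n - 1) * B) = (c2 * B) * (δ ^ (n - 1) * δ ^ (-k))
        by ring]
      apply mul_le_mul_of_nonneg_right hCv₃
      have := Real.rpow_nonneg hδ0.le (-k)
      positivity
    calc ENNReal.ofReal ((1 / C) * δ ^ ((n : ℝ) - 1 - k))
        ≤ ENNReal.ofReal (c2 * δ ^ (-k) * (δ ^ (n - 1) * B)) := ENNReal.ofReal_le_ofReal hreal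
      _ = ENNReal.ofReal (c2 * δ ^ (-k))
            * volume (ball (0 : EuclideanSpace ℝ (Fin (n - 1))) δ) := by
          rw [Measure.addHaar_ball volume 0 hδ0.le, hdim, ← hBor,
            ENNReal.ofReal_mul (by positivity),
            ENNReal.ofReal_mul (by positivity),
            ENNReal.ofReal_mul (by positivity)]
      _ ≤ _ := lb_aux measurableSet_ball hAU hpt
end
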